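/- arXiv:1904.09841 — 10 statements merged into one kernel-verified Lean document; each statement's English description precedes it below -/
import Mathlib

section
/- Let A ∈ ℝ^{n×n}, W ∈ {0,1}^{n×n}, and let ‖·‖_* be an entrywise matrix norm. Suppose there is a probability distribution over finitely many labeled partitions of [n]×[n], where each partition consists of at most r combinatorial rectangles each labeled 0 or 1, such that: (1) for every (i,j) with W_{i,j} = 1, the probability that (i,j) lies in a rectangle labeled 1 is at least 1 − ε₁, and (2) for every (i,j) with W_{i,j} = 0, the probability that (i,j) lies in a rectangle labeled 0 is at least 1 − ε₂. Let OPT = min over matrices L̂ of rank at most k of ‖(A − L̂) ∘ W‖_*, and let L_opt be a matrix of rank at most k achieving OPT. Then for every k' ≥ k·r and every matrix L satisfying ‖A ∘ W − L‖_* ≤ (min over matrices of rank at most k' L̂ of ‖A ∘ W − L̂‖_*) + Δ for some Δ ≥ 0 and with rank(L) ≤ k', it holds that ‖(A − L) ∘ W‖_* ≤ OPT + ε₁·‖A ∘ W‖_* + ε₂·‖L_opt ∘ (1 − W)‖_* + Δ. -/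
open Matrix BigOperators

/-- Entrywise matrix norm induced by `g : ℝ≥0 → ℝ≥0` (modeled on all of `ℝ`):
`‖M‖_* = ∑_{i,j} g |M_{i,j}|`. -/
noncomputable def enorm {n p : ℕ} (g : ℝ → ℝ) (M : Matrix (Fin n) (Fin p) ℝ) : ℝ :=
  ∑ i, ∑ j, g |M i j|

/-- The entrywise complement `1 - W` of a binary matrix `W`. -/
def oneSub {n p : ℕ} (W : Matrix (Fin n) (Fin p) ℝ) : Matrix (Fin n) (Fin p) ℝ :=
  Matrix.of fun i j => 1 - W i j


lemma mrank_add_le {n : ℕ} (A B : Matrix (Fin n) (Fin n) ℝ) :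
    (A + B).rank ≤ A.rank + B.rank := by
  classical
  have hle : LinearMap.range (A + B).mulVecLin ≤
      LinearMap.range A.mulVecLin ⊔ LinearMap.range B.mulVecLin := by
    rintro x ⟨v, rfl⟩
    rw [Matrix.mulVecLin_add]
    exact Submodule.add_mem_sup ⟨v, rfl⟩ ⟨v, rfl⟩
  calc (A + B).rank ≤ Module.finrank ℝ
        ↥(LinearMap.range A.mulVecLin ⊔ LinearMap.range B.mulVecLin) :=
        Submodule.finrank_mono hle
    _ ≤ A.rank + B.rank := Submodule.finrank_add_le_finrank_add_finrank _ _

lemma mrank_sum_le {n : ℕ} {α : Type*} (s : Finset α) (f : α → Matrix (Fin n) (Fin n) ℝ) :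
    (∑ c ∈ s, f c).rank ≤ ∑ c ∈ s, (f c).rank := by
  classical
  induction s using Finset.induction_on with
  | empty => simp [Matrix.rank_zero]
  | insert _ _ h ih =>
    rw [Finset.sum_insert h, Finset.sum_insert h]
    exact (mrank_add_le _ _).trans (add_le_add_right ih _)

lemma mrank_mask_rect {n : ℕ} (M : Matrix (Fin n) (Fin n) ℝ)
    (p : Fin n → Fin n → Prop) [∀ i j, Decidable (p i j)] (S T : Set (Fin n))
    (h : ∀ i j, p i j ↔ i ∈ S ∧ j ∈ T) :
    Matrix.rank (Matrix.of fun i j => if p i j then M i j else 0) ≤ M.rank := by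
  classical
  have heq : (Matrix.of fun i j => if p i j then M i j else 0) =
      (Matrix.diagonal fun i => if i ∈ S then (1:ℝ) else 0) * M *
      (Matrix.diagonal fun j => if j ∈ T then (1:ℝ) else 0) := by
    ext i j
    rw [Matrix.mul_diagonal, Matrix.diagonal_mul]
    by_cases hi : i ∈ S <;> by_cases hj : j ∈ T <;>
      simp [hi, hj, h i j, Matrix.of_apply]
  rw [heq]
  exact (Matrix.rank_mul_le_left _ _).trans (Matrix.rank_mul_le_right _ _)

lemma exists_le_wavg {ι : Type} [Fintype ι] (w v : ι → ℝ)
    (hw : ∀ z, 0 ≤ w z) (hs : ∑ z, w z = 1) :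
    ∃ z, v z ≤ ∑ z, w z * v z := by
  by_contra h
  push_neg at h
  have hne : ∃ z₀, 0 < w z₀ := by
    by_contra h'
    push_neg at h'
    have : ∑ z, w z = 0 :=
      Finset.sum_eq_zero fun z _ => le_antisymm (h' z) (hw z)
    rw [this] at hs; norm_num at hs
  obtain ⟨z₀, hz₀⟩ := hne
  have hlt : ∑ z, w z * (∑ z', w z' * v z') < ∑ z, w z * v z :=
    Finset.sum_lt_sum (fun z _ => mul_le_mul_of_nonneg_left (h z).le (hw z))
      ⟨z₀, Finset.mem_univ _, mul_lt_mul_of_pos_left (h z₀) hz₀⟩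
  rw [← Finset.sum_mul, hs, one_mul] at hlt
  exact lt_irrefl _ hlt

lemma enorm_nonneg' {n : ℕ} (g : ℝ → ℝ) (hg : ∀ x : ℝ, 0 ≤ x → 0 ≤ g x)
    (M : Matrix (Fin n) (Fin n) ℝ) : 0 ≤ enorm g M :=
  Finset.sum_nonneg fun i _ => Finset.sum_nonneg fun j _ => hg _ (abs_nonneg _)

/-- bicriteria masked low-rank approximation from a distribution over
labeled rectangle partitions of `[n] × [n]`. -/
theorem stmt0
    {n k k' r : ℕ} {ι : Type} [Fintype ι]
    (A W : Matrix (Fin n) (Fin n) ℝ)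
    (hWbin : ∀ i j, W i j = 0 ∨ W i j = 1)
    (g : ℝ → ℝ) (hg0 : g 0 = 0)
    (hg_nonneg : ∀ x : ℝ, 0 ≤ x → 0 ≤ g x)
    (hg_mono : ∀ x y : ℝ, 0 ≤ x → x ≤ y → g x ≤ g y)
    (ε₁ ε₂ Δ : ℝ) (hΔ : 0 ≤ Δ)
    -- a probability distribution over finitely many labeled partitions,
    -- each consisting of at most `r` rectangles labeled by `lab`
    (w : ι → ℝ) (hw_nonneg : ∀ z, 0 ≤ w z) (hw_sum : ∑ z, w z = 1)
    (part : ι → Fin n × Fin n → Fin r)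
    (lab : ι → Fin r → Bool)
    (h_rect : ∀ z c, ∃ S T : Set (Fin n),
      ∀ i j, part z (i, j) = c ↔ (i ∈ S ∧ j ∈ T))
    (h_cover1 : ∀ i j, W i j = 1 →
      1 - ε₁ ≤ ∑ z ∈ Finset.univ.filter fun z => lab z (part z (i, j)) = true, w z)
    (h_cover0 : ∀ i j, W i j = 0 →
      1 - ε₂ ≤ ∑ z ∈ Finset.univ.filter fun z => lab z (part z (i, j)) = false, w z)
    -- `Lopt` achieves `OPT`, the min over rank-at-most-`k` matrices
    (Lopt : Matrix (Fin n) (Fin n) ℝ) (hLopt_rank : Lopt.rank ≤ k)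
    (hLopt_opt : ∀ M : Matrix (Fin n) (Fin n) ℝ, M.rank ≤ k →
      enorm g (Matrix.hadamard (A - Lopt) W) ≤ enorm g (Matrix.hadamard (A - M) W))
    (hk' : k * r ≤ k')
    (L : Matrix (Fin n) (Fin n) ℝ) (hL_rank : L.rank ≤ k')
    (hL_near : enorm g (Matrix.hadamard A W - L) ≤
      sInf {x : ℝ | ∃ M : Matrix (Fin n) (Fin n) ℝ, M.rank ≤ k' ∧
        x = enorm g (Matrix.hadamard A W - M)} + Δ) :
    enorm g (Matrix.hadamard (A - L) W) ≤
      enorm g (Matrix.hadamard (A - Lopt) W)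
        + ε₁ * enorm g (Matrix.hadamard A W)
        + ε₂ * enorm g (Matrix.hadamard Lopt (oneSub W)) + Δ := by
    classical
  -- the masked versions of `Lopt`
  set Mz : ι → Matrix (Fin n) (Fin n) ℝ := fun z =>
    Matrix.of fun i j => if lab z (part z (i, j)) = true then Lopt i j else 0 with hMz
  -- rank bound for each `Mz z`
  have hMz_rank : ∀ z, (Mz z).rank ≤ k' := by
    intro z
    have hdecomp : Mz z = ∑ c ∈ Finset.univ.filter (fun c => lab z c = true),
        Matrix.of (fun i j => if part z (i, j) = c then Lopt i j else 0) := by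
      ext i j
      rw [Matrix.sum_apply]
      simp only [Matrix.of_apply]
      rw [Finset.sum_ite_eq]
      simp [hMz]
    rw [hdecomp]
    calc (∑ c ∈ Finset.univ.filter (fun c => lab z c = true),
            Matrix.of (fun i j => if part z (i, j) = c then Lopt i j else 0)).rank
        ≤ ∑ c ∈ Finset.univ.filter (fun c => lab z c = true),
            (Matrix.of (fun i j => if part z (i, j) = c then Lopt i j else 0)).rank :=
          mrank_sum_le _ _
      _ ≤ ∑ _c ∈ Finset.univ.filter (fun c => lab z c = true), k := by
          refine Finset.sum_le_sum fun c _ => ?_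
          obtain ⟨S, T, hST⟩ := h_rect z c
          exact le_trans (mrank_mask_rect Lopt (fun i j => part z (i, j) = c) S T hST)
            hLopt_rank
      _ = (Finset.univ.filter (fun c => lab z c = true)).card * k := by
          rw [Finset.sum_const, smul_eq_mul]
      _ ≤ r * k := by
          have := (Finset.univ.filter (fun c => lab z c = true)).card_le_univ
          simpa using Nat.mul_le_mul_right k (le_trans this (by simp))
      _ ≤ k' := by rw [Nat.mul_comm]; exact hk'
  -- entrywise bound on the average error of the `Mz z`
  have hkey : ∀ i j, ∑ z, w z * g |(Matrix.hadamard A W - Mz z) i j| ≤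
      g |Matrix.hadamard (A - Lopt) W i j| + ε₁ * g |Matrix.hadamard A W i j|
        + ε₂ * g |Matrix.hadamard Lopt (oneSub W) i j| := by
    intro i j
    have hsplit := Finset.sum_filter_add_sum_filter_not Finset.univ
      (fun z => lab z (part z (i, j)) = true)
      (fun z => w z * g |(Matrix.hadamard A W - Mz z) i j|)
    have hwsplit := Finset.sum_filter_add_sum_filter_not Finset.univ
      (fun z => lab z (part z (i, j)) = true) w
    set t := ∑ z ∈ Finset.univ.filter (fun z => lab z (part z (i, j)) = true), w z with ht
    set f := ∑ z ∈ Finset.univ.filter (fun z => ¬ lab z (part z (i, j)) = true), w z with hf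
    have htn : 0 ≤ t := Finset.sum_nonneg fun z _ => hw_nonneg z
    have hfn : 0 ≤ f := Finset.sum_nonneg fun z _ => hw_nonneg z
    have htf : t + f = 1 := by rw [ht, hf, hwsplit, hw_sum]
    have hT : ∑ z ∈ Finset.univ.filter (fun z => lab z (part z (i, j)) = true),
        w z * g |(Matrix.hadamard A W - Mz z) i j| = t * g |A i j * W i j - Lopt i j| := by
      rw [ht, Finset.sum_mul]
      refine Finset.sum_congr rfl fun z hz => ?_
      rw [Finset.mem_filter] at hz
      simp [hMz, hz.2, Matrix.hadamard_apply, Matrix.sub_apply]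
    have hF : ∑ z ∈ Finset.univ.filter (fun z => ¬ lab z (part z (i, j)) = true),
        w z * g |(Matrix.hadamard A W - Mz z) i j| = f * g |A i j * W i j| := by
      rw [hf, Finset.sum_mul]
      refine Finset.sum_congr rfl fun z hz => ?_
      rw [Finset.mem_filter] at hz
      simp [hMz, hz.2, Matrix.hadamard_apply, Matrix.sub_apply]
    rw [← hsplit, hT, hF]
    rcases hWbin i j with hW | hW
    · -- W i j = 0
      have ht2 : t ≤ ε₂ := by
        have := h_cover0 i j hW
        have hfeq : f = ∑ z ∈ Finset.univ.filter
            (fun z => lab z (part z (i, j)) = false), w z := by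
          rw [hf]; congr 1; ext z; simp
        linarith [htf, hfeq ▸ this]
      have hg1 : 0 ≤ g |Lopt i j| := hg_nonneg _ (abs_nonneg _)
      simp only [Matrix.hadamard_apply, Matrix.sub_apply, oneSub, Matrix.of_apply, hW,
        mul_zero, zero_mul, zero_sub, abs_neg, abs_zero, hg0, sub_zero, mul_one]
      have := mul_le_mul_of_nonneg_right ht2 hg1
      linarith
    · -- W i j = 1
      have hf1 : f ≤ ε₁ := by
        have := h_cover1 i j hW
        rw [← ht] at this; linarith
      have ht1 : t ≤ 1 := by linarith
      have hg1 : 0 ≤ g |A i j - Lopt i j| := hg_nonneg _ (abs_nonneg _)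
      have hg2 : 0 ≤ g |A i j| := hg_nonneg _ (abs_nonneg _)
      simp only [Matrix.hadamard_apply, Matrix.sub_apply, oneSub, Matrix.of_apply, hW]
      rw [mul_one, mul_one, sub_self, mul_zero, abs_zero, hg0, mul_zero, add_zero]
      calc t * g |A i j - Lopt i j| + f * g |A i j|
          ≤ 1 * g |A i j - Lopt i j| + ε₁ * g |A i j| :=
            add_le_add (mul_le_mul_of_nonneg_right ht1 hg1)
              (mul_le_mul_of_nonneg_right hf1 hg2)
        _ = g |A i j - Lopt i j| + ε₁ * g |A i j| := by rw [one_mul]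
  -- the average error of the `Mz z`
  have havg : ∑ z, w z * enorm g (Matrix.hadamard A W - Mz z) ≤
      enorm g (Matrix.hadamard (A - Lopt) W) + ε₁ * enorm g (Matrix.hadamard A W)
        + ε₂ * enorm g (Matrix.hadamard Lopt (oneSub W)) := by
    have hL : ∑ z, w z * enorm g (Matrix.hadamard A W - Mz z) =
        ∑ i, ∑ j, ∑ z, w z * g |(Matrix.hadamard A W - Mz z) i j| := by
      simp only [_root_.enorm, Finset.mul_sum]
      rw [Finset.sum_comm]
      exact Finset.sum_congr rfl fun i _ => Finset.sum_comm
    rw [hL]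
    have hR : enorm g (Matrix.hadamard (A - Lopt) W) + ε₁ * enorm g (Matrix.hadamard A W)
        + ε₂ * enorm g (Matrix.hadamard Lopt (oneSub W)) =
        ∑ i, ∑ j, (g |Matrix.hadamard (A - Lopt) W i j| + ε₁ * g |Matrix.hadamard A W i j|
          + ε₂ * g |Matrix.hadamard Lopt (oneSub W) i j|) := by
      simp only [_root_.enorm, Finset.mul_sum, Finset.sum_add_distrib]
    rw [hR]
    exact Finset.sum_le_sum fun i _ => Finset.sum_le_sum fun j _ => hkey i j
  -- pick a good `z₀`
  obtain ⟨z₀, hz₀⟩ := exists_le_wavg w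
    (fun z => enorm g (Matrix.hadamard A W - Mz z)) hw_nonneg hw_sum
  -- sInf is below the error of `Mz z₀`
  have hinf : sInf {x : ℝ | ∃ M : Matrix (Fin n) (Fin n) ℝ, M.rank ≤ k' ∧
      x = enorm g (Matrix.hadamard A W - M)} ≤ enorm g (Matrix.hadamard A W - Mz z₀) := by
    refine csInf_le ⟨0, ?_⟩ ⟨Mz z₀, hMz_rank z₀, rfl⟩
    rintro x ⟨M, _, rfl⟩
    exact enorm_nonneg' g hg_nonneg _
  -- first step: masked error is below unmasked error
  have hstep1 : enorm g (Matrix.hadamard (A - L) W) ≤ enorm g (Matrix.hadamard A W - L) := by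
    refine Finset.sum_le_sum fun i _ => Finset.sum_le_sum fun j _ => ?_
    rcases hWbin i j with hW | hW
    · simp only [Matrix.hadamard_apply, Matrix.sub_apply, hW, mul_zero, abs_zero]
      rw [hg0]
      exact hg_nonneg _ (abs_nonneg _)
    · simp [Matrix.hadamard_apply, Matrix.sub_apply, hW]
  calc enorm g (Matrix.hadamard (A - L) W) ≤ enorm g (Matrix.hadamard A W - L) := hstep1
    _ ≤ sInf {x : ℝ | ∃ M : Matrix (Fin n) (Fin n) ℝ, M.rank ≤ k' ∧
        x = enorm g (Matrix.hadamard A W - M)} + Δ := hL_near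
    _ ≤ enorm g (Matrix.hadamard A W - Mz z₀) + Δ := by linarith
    _ ≤ (∑ z, w z * enorm g (Matrix.hadamard A W - Mz z)) + Δ := by linarith
    _ ≤ enorm g (Matrix.hadamard (A - Lopt) W) + ε₁ * enorm g (Matrix.hadamard A W)
        + ε₂ * enorm g (Matrix.hadamard Lopt (oneSub W)) + Δ := by linarith
end

section
/- Masked tensor low-rank approximation from multiparty partitions (order 3): Let A and W be order-3 tensors indexed by [n]×[n]×[n], with A real-valued and W binary, and let ‖·‖_* be an entrywise norm on tensors. Suppose there is a probability distribution over finitely many labeled partitions of [n]×[n]×[n], where each partition consists of at most r combinatorial boxes S×T×U each labeled 0 or 1, such that every entry (i,j,l) with W_{i,j,l} = 1 lies in a box labeled 1 with probability at least 1 − ε₁, and every entry with W_{i,j,l} = 0 lies in a box labeled 0 with probability at least 1 − ε₂. Let OPT = infimum over tensors L̂ of rank at most k of ‖(A − L̂) ∘ W‖_*, and for γ > 0 let L_γ be a tensor of rank at most k with ‖(A − L_γ) ∘ W‖_* ≤ OPT + γ. Then for every k' ≥ k·r and every tensor L of rank at most k' satisfying ‖A ∘ W − L‖_* ≤ (infimum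 over tensors L̂ of rank at most k' of ‖A ∘ W − L̂‖_*) + ε₃·‖A ∘ W‖_*, it holds that ‖(A − L) ∘ W‖_* ≤ OPT + (ε₁ + ε₃)·‖A ∘ W‖_* + ε₂·‖L_γ ∘ (1 − W)‖_* + γ. -/
open BigOperators

/-- Entrywise norm of an order-3 tensor induced by `g`. -/
noncomputable def tnorm {n : ℕ} (g : ℝ → ℝ) (T : Fin n → Fin n → Fin n → ℝ) : ℝ :=
  ∑ i, ∑ j, ∑ m, g |T i j m|

/-- Entrywise (Hadamard) product of order-3 tensors. -/
def thad {n : ℕ} (T S : Fin n → Fin n → Fin n → ℝ) : Fin n → Fin n → Fin n → ℝ :=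
  fun i j m => T i j m * S i j m

/-- The entrywise complement `1 - W` of a binary tensor `W`. -/
def tOneSub {n : ℕ} (W : Fin n → Fin n → Fin n → ℝ) : Fin n → Fin n → Fin n → ℝ :=
  fun i j m => 1 - W i j m

/-- An order-3 tensor has (CP) rank at most `k`. -/
def TensorRankLE {n : ℕ} (k : ℕ) (T : Fin n → Fin n → Fin n → ℝ) : Prop :=
  ∃ u v w : Fin k → Fin n → ℝ, ∀ i j m, T i j m = ∑ l, u l i * v l j * w l m

lemma pad_sum {a b : ℕ} (hab : a ≤ b) (f : Fin b → ℝ)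
    (hf : ∀ l : Fin b, ¬ (l : ℕ) < a → f l = 0) :
    ∑ l, f l = ∑ l : Fin a, f (Fin.castLE hab l) := by
  rw [show (fun l : Fin a => f (Fin.castLE hab l)) = fun l => f ((Fin.castLEEmb hab) l) from rfl,
    ← Finset.sum_map Finset.univ (Fin.castLEEmb hab) f]
  refine (Finset.sum_subset (Finset.subset_univ _) ?_).symm
  intro l _ hl
  refine hf l fun hlt => hl ?_
  simpa using ⟨⟨(l : ℕ), hlt⟩, by simp [Fin.castLEEmb]⟩

lemma rank_mono {n a b : ℕ} (hab : a ≤ b) {T : Fin n → Fin n → Fin n → ℝ}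
    (h : TensorRankLE a T) : TensorRankLE b T := by
  classical
  obtain ⟨u, v, w, hT⟩ := h
  refine ⟨fun l => if h : (l : ℕ) < a then u ⟨l, h⟩ else 0,
          fun l => if h : (l : ℕ) < a then v ⟨l, h⟩ else 0,
          fun l => if h : (l : ℕ) < a then w ⟨l, h⟩ else 0, ?_⟩
  intro i j m
  rw [hT, pad_sum hab _ (fun l hl => by simp [dif_neg hl])]
  refine Finset.sum_congr rfl fun l _ => ?_
  have hl : ((Fin.castLE hab l : Fin b) : ℕ) < a := l.isLt
  simp only [dif_pos hl]
  norm_num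

lemma rank_of_card {n k : ℕ} {ι' : Type} [Fintype ι'] (hcard : Fintype.card ι' ≤ k)
    (u v w : ι' → Fin n → ℝ) :
    TensorRankLE k (fun i j m => ∑ l, u l i * v l j * w l m) := by
  apply rank_mono hcard
  refine ⟨fun l => u ((Fintype.equivFin ι').symm l),
          fun l => v ((Fintype.equivFin ι').symm l),
          fun l => w ((Fintype.equivFin ι').symm l), fun i j m => ?_⟩
  exact (Equiv.sum_comp (Fintype.equivFin ι').symm
    (fun l => u l i * v l j * w l m)).symm

lemma tnorm_nonneg {n : ℕ} {g : ℝ → ℝ} (hg : ∀ x : ℝ, 0 ≤ x → 0 ≤ g x)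
    (T : Fin n → Fin n → Fin n → ℝ) : 0 ≤ tnorm g T := by
  refine Finset.sum_nonneg fun i _ => Finset.sum_nonneg fun j _ =>
    Finset.sum_nonneg fun m _ => hg _ (abs_nonneg _)

lemma tnorm_le {n : ℕ} {g : ℝ → ℝ} (hg : ∀ x y : ℝ, 0 ≤ x → x ≤ y → g x ≤ g y)
    (T S : Fin n → Fin n → Fin n → ℝ) (h : ∀ i j m, |T i j m| ≤ |S i j m|) :
    tnorm g T ≤ tnorm g S := by
  refine Finset.sum_le_sum fun i _ => Finset.sum_le_sum fun j _ =>
    Finset.sum_le_sum fun m _ => hg _ _ (abs_nonneg _) (h i j m)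

/-- masked tensor low-rank approximation from a distribution over
labeled box partitions of `[n] × [n] × [n]`. -/
theorem stmt7
    {n k k' r : ℕ} {ι : Type} [Fintype ι]
    (A W : Fin n → Fin n → Fin n → ℝ)
    (hWbin : ∀ i j m, W i j m = 0 ∨ W i j m = 1)
    (g : ℝ → ℝ) (hg0 : g 0 = 0)
    (hg_nonneg : ∀ x : ℝ, 0 ≤ x → 0 ≤ g x)
    (hg_mono : ∀ x y : ℝ, 0 ≤ x → x ≤ y → g x ≤ g y)
    (ε₁ ε₂ ε₃ γ : ℝ) (hγ : 0 < γ)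
    -- a probability distribution over finitely many labeled box partitions,
    -- each consisting of at most `r` boxes labeled by `lab`
    (w : ι → ℝ) (hw_nonneg : ∀ z, 0 ≤ w z) (hw_sum : ∑ z, w z = 1)
    (part : ι → Fin n × Fin n × Fin n → Fin r)
    (lab : ι → Fin r → Bool)
    (h_box : ∀ z c, ∃ S T U : Set (Fin n),
      ∀ i j m, part z (i, j, m) = c ↔ (i ∈ S ∧ j ∈ T ∧ m ∈ U))
    (h_cover1 : ∀ i j m, W i j m = 1 →
      1 - ε₁ ≤ ∑ z ∈ Finset.univ.filter fun z => lab z (part z (i, j, m)) = true, w z)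
    (h_cover0 : ∀ i j m, W i j m = 0 →
      1 - ε₂ ≤ ∑ z ∈ Finset.univ.filter fun z => lab z (part z (i, j, m)) = false, w z)
    -- `Lγ` is a rank-at-most-`k` tensor achieving `OPT + γ`
    (Lγ : Fin n → Fin n → Fin n → ℝ) (hLγ_rank : TensorRankLE k Lγ)
    (hLγ : tnorm g (thad (A - Lγ) W) ≤
      sInf {x : ℝ | ∃ M : Fin n → Fin n → Fin n → ℝ, TensorRankLE k M ∧
        x = tnorm g (thad (A - M) W)} + γ)
    (hk' : k * r ≤ k')
    (L : Fin n → Fin n → Fin n → ℝ) (hL_rank : TensorRankLE k' L)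
    (hL_near : tnorm g (thad A W - L) ≤
      sInf {x : ℝ | ∃ M : Fin n → Fin n → Fin n → ℝ, TensorRankLE k' M ∧
        x = tnorm g (thad A W - M)} + ε₃ * tnorm g (thad A W)) :
    tnorm g (thad (A - L) W) ≤
      sInf {x : ℝ | ∃ M : Fin n → Fin n → Fin n → ℝ, TensorRankLE k M ∧
        x = tnorm g (thad (A - M) W)}
        + (ε₁ + ε₃) * tnorm g (thad A W)
        + ε₂ * tnorm g (thad Lγ (tOneSub W)) + γ := by
  classical
  choose S T U hSTU using h_box
  obtain ⟨u, v, w₃, hLγeq⟩ := hLγ_rank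
  -- the masked tensors
  set M : ι → Fin n → Fin n → Fin n → ℝ :=
    fun z i j m => if lab z (part z (i, j, m)) = true then Lγ i j m else 0 with hM
  -- each M z has rank ≤ k'
  have hMrank : ∀ z, TensorRankLE k' (M z) := by
    intro z
    have hcard : Fintype.card (Fin k × Fin r) ≤ k' := by
      simpa [Fintype.card_prod] using hk'
    have hr := rank_of_card hcard
      (fun p i => ((if lab z p.2 = true then (1 : ℝ) else 0) *
        (if i ∈ S z p.2 then (1 : ℝ) else 0)) * u p.1 i)
      (fun p j => (if j ∈ T z p.2 then (1 : ℝ) else 0) * v p.1 j)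
      (fun p m => (if m ∈ U z p.2 then (1 : ℝ) else 0) * w₃ p.1 m)
    have heq : (fun i j m => ∑ p : Fin k × Fin r,
        (((if lab z p.2 = true then (1 : ℝ) else 0) *
          (if i ∈ S z p.2 then (1 : ℝ) else 0)) * u p.1 i) *
        ((if j ∈ T z p.2 then (1 : ℝ) else 0) * v p.1 j) *
        ((if m ∈ U z p.2 then (1 : ℝ) else 0) * w₃ p.1 m)) = M z := by
      funext i j m
      rw [Fintype.sum_prod_type, Finset.sum_comm]
      have hinner : ∀ c : Fin r, ∑ l : Fin k,
          (((if lab z c = true then (1 : ℝ) else 0) *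
            (if i ∈ S z c then (1 : ℝ) else 0)) * u l i) *
          ((if j ∈ T z c then (1 : ℝ) else 0) * v l j) *
          ((if m ∈ U z c then (1 : ℝ) else 0) * w₃ l m)
          = ((if lab z c = true then (1 : ℝ) else 0) *
             ((if i ∈ S z c then (1 : ℝ) else 0) *
              ((if j ∈ T z c then (1 : ℝ) else 0) *
               (if m ∈ U z c then (1 : ℝ) else 0)))) * Lγ i j m := by
        intro c
        rw [hLγeq, Finset.mul_sum]
        exact Finset.sum_congr rfl fun l _ => by ring
      simp only [hinner]
      rw [Finset.sum_eq_single (part z (i, j, m))]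
      · obtain ⟨hiS, hjT, hmU⟩ := (hSTU z (part z (i, j, m)) i j m).mp rfl
        simp only [if_pos hiS, if_pos hjT, if_pos hmU, hM]
        by_cases hl : lab z (part z (i, j, m)) = true <;> simp [hl]
      · intro c _ hc
        have hnot : ¬ (i ∈ S z c ∧ j ∈ T z c ∧ m ∈ U z c) := by
          intro hmem
          exact hc (((hSTU z c i j m).mpr hmem).symm)
        by_cases h1 : i ∈ S z c
        · by_cases h2 : j ∈ T z c
          · have h3 : m ∉ U z c := fun h3 => hnot ⟨h1, h2, h3⟩
            simp [h3]
          · simp [h2]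
        · simp [h1]
      · intro h; exact absurd (Finset.mem_univ _) h
    rw [heq] at hr
    exact hr
  -- notation for the two infima
  set OPTk := sInf {x : ℝ | ∃ N : Fin n → Fin n → Fin n → ℝ, TensorRankLE k N ∧
      x = tnorm g (thad (A - N) W)} with hOPTk
  set OPTk' := sInf {x : ℝ | ∃ N : Fin n → Fin n → Fin n → ℝ, TensorRankLE k' N ∧
      x = tnorm g (thad A W - N)} with hOPTk'
  -- step 1 : masked error of L is at most unmasked error against A∘W
  have step1 : tnorm g (thad (A - L) W) ≤ tnorm g (thad A W - L) := by
    refine tnorm_le hg_mono _ _ fun i j m => ?_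
    rcases hWbin i j m with h0 | h1
    · simp [thad, h0, abs_nonneg]
    · simp only [thad, Pi.sub_apply, h1, mul_one]
      exact le_rfl
  -- step 2 : OPTk' is at most the average error of the M z
  have hbdd : BddBelow {x : ℝ | ∃ N : Fin n → Fin n → Fin n → ℝ, TensorRankLE k' N ∧
      x = tnorm g (thad A W - N)} := by
    refine ⟨0, fun x hx => ?_⟩
    obtain ⟨N, _, rfl⟩ := hx
    exact tnorm_nonneg hg_nonneg _
  have step2 : OPTk' ≤ ∑ z, w z * tnorm g (thad A W - M z) := by
    have hle : ∀ z, OPTk' ≤ tnorm g (thad A W - M z) := fun z =>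
      csInf_le hbdd ⟨M z, hMrank z, rfl⟩
    calc OPTk' = ∑ z, w z * OPTk' := by
          rw [← Finset.sum_mul, hw_sum, one_mul]
      _ ≤ ∑ z, w z * tnorm g (thad A W - M z) :=
          Finset.sum_le_sum fun z _ =>
            mul_le_mul_of_nonneg_left (hle z) (hw_nonneg z)
  -- per entry bound
  have key : ∀ i j m, ∑ z, w z * g |A i j m * W i j m - M z i j m| ≤
      g |(A i j m - Lγ i j m) * W i j m| + ε₁ * g |A i j m * W i j m|
        + ε₂ * g |Lγ i j m * (1 - W i j m)| := by
    intro i j m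
    have hsplit := Finset.sum_filter_add_sum_filter_not Finset.univ
      (fun z => lab z (part z (i, j, m)) = true)
      (fun z => w z * g |A i j m * W i j m - M z i j m|)
    have hsplitw := Finset.sum_filter_add_sum_filter_not Finset.univ
      (fun z => lab z (part z (i, j, m)) = true) w
    have hfilter_eq : (Finset.univ.filter fun z => ¬ lab z (part z (i, j, m)) = true)
        = Finset.univ.filter fun z => lab z (part z (i, j, m)) = false := by
      ext z; simp
    have htrue_nonneg : 0 ≤ ∑ z ∈ Finset.univ.filter
        (fun z => lab z (part z (i, j, m)) = true), w z :=
      Finset.sum_nonneg fun z _ => hw_nonneg z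
    have hfalse_nonneg : 0 ≤ ∑ z ∈ Finset.univ.filter
        (fun z => ¬ lab z (part z (i, j, m)) = true), w z :=
      Finset.sum_nonneg fun z _ => hw_nonneg z
    rcases hWbin i j m with h0 | h1
    · -- W = 0 case
      have htrue_le : ∑ z ∈ Finset.univ.filter
          (fun z => lab z (part z (i, j, m)) = true), w z ≤ ε₂ := by
        have h2 := h_cover0 i j m h0
        rw [hfilter_eq] at hsplitw
        linarith [hw_sum ▸ hsplitw]
      have hTterm : ∀ z ∈ Finset.univ.filter
          (fun z => lab z (part z (i, j, m)) = true),
          w z * g |A i j m * W i j m - M z i j m| = w z * g |Lγ i j m| := by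
        intro z hz
        rw [Finset.mem_filter] at hz
        simp [hM, hz.2, h0, abs_sub_comm]
      have hFterm : ∀ z ∈ Finset.univ.filter
          (fun z => ¬ lab z (part z (i, j, m)) = true),
          w z * g |A i j m * W i j m - M z i j m| = 0 := by
        intro z hz
        rw [Finset.mem_filter] at hz
        simp [hM, hz.2, h0, hg0]
      rw [← hsplit, Finset.sum_congr rfl hTterm, Finset.sum_congr rfl hFterm,
        Finset.sum_const_zero, add_zero, ← Finset.sum_mul]
      have hgnn : 0 ≤ g |Lγ i j m| := hg_nonneg _ (abs_nonneg _)
      have : (∑ z ∈ Finset.univ.filter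
          (fun z => lab z (part z (i, j, m)) = true), w z) * g |Lγ i j m|
          ≤ ε₂ * g |Lγ i j m| := mul_le_mul_of_nonneg_right htrue_le hgnn
      calc (∑ z ∈ Finset.univ.filter
          (fun z => lab z (part z (i, j, m)) = true), w z) * g |Lγ i j m|
          ≤ ε₂ * g |Lγ i j m| := this
        _ = g |(A i j m - Lγ i j m) * W i j m| + ε₁ * g |A i j m * W i j m|
            + ε₂ * g |Lγ i j m * (1 - W i j m)| := by
            simp [h0, hg0]
    · -- W = 1 case
      have hfalse_le : ∑ z ∈ Finset.univ.filter
          (fun z => ¬ lab z (part z (i, j, m)) = true), w z ≤ ε₁ := by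
        have h2 := h_cover1 i j m h1
        linarith [hw_sum ▸ hsplitw]
      have htrue_le1 : ∑ z ∈ Finset.univ.filter
          (fun z => lab z (part z (i, j, m)) = true), w z ≤ 1 := by
        linarith [hw_sum ▸ hsplitw]
      have hTterm : ∀ z ∈ Finset.univ.filter
          (fun z => lab z (part z (i, j, m)) = true),
          w z * g |A i j m * W i j m - M z i j m|
            = w z * g |A i j m - Lγ i j m| := by
        intro z hz
        rw [Finset.mem_filter] at hz
        simp [hM, hz.2, h1]
      have hFterm : ∀ z ∈ Finset.univ.filter
          (fun z => ¬ lab z (part z (i, j, m)) = true),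
          w z * g |A i j m * W i j m - M z i j m| = w z * g |A i j m| := by
        intro z hz
        rw [Finset.mem_filter] at hz
        simp [hM, hz.2, h1]
      rw [← hsplit, Finset.sum_congr rfl hTterm, Finset.sum_congr rfl hFterm,
        ← Finset.sum_mul, ← Finset.sum_mul]
      have hg1 : 0 ≤ g |A i j m - Lγ i j m| := hg_nonneg _ (abs_nonneg _)
      have hg2 : 0 ≤ g |A i j m| := hg_nonneg _ (abs_nonneg _)
      have hb1 : (∑ z ∈ Finset.univ.filter
          (fun z => lab z (part z (i, j, m)) = true), w z) * g |A i j m - Lγ i j m|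
          ≤ g |A i j m - Lγ i j m| := by
        nlinarith
      have hb2 : (∑ z ∈ Finset.univ.filter
          (fun z => ¬ lab z (part z (i, j, m)) = true), w z) * g |A i j m|
          ≤ ε₁ * g |A i j m| := mul_le_mul_of_nonneg_right hfalse_le hg2
      have hrhs : g |(A i j m - Lγ i j m) * W i j m| + ε₁ * g |A i j m * W i j m|
          + ε₂ * g |Lγ i j m * (1 - W i j m)|
          = g |A i j m - Lγ i j m| + ε₁ * g |A i j m| := by
        simp [h1, hg0]
      rw [hrhs]
      linarith
  -- step 3 : average error of M z is small
  have swap : ∀ f : ι → Fin n → Fin n → Fin n → ℝ,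
      ∑ z, ∑ i, ∑ j, ∑ m, f z i j m = ∑ i, ∑ j, ∑ m, ∑ z, f z i j m := by
    intro f
    rw [Finset.sum_comm]
    refine Finset.sum_congr rfl fun i _ => ?_
    rw [Finset.sum_comm]
    refine Finset.sum_congr rfl fun j _ => ?_
    rw [Finset.sum_comm]
  have step3 : ∑ z, w z * tnorm g (thad A W - M z) ≤
      tnorm g (thad (A - Lγ) W) + ε₁ * tnorm g (thad A W)
        + ε₂ * tnorm g (thad Lγ (tOneSub W)) := by
    have hlhs : ∑ z, w z * tnorm g (thad A W - M z)
        = ∑ i, ∑ j, ∑ m, ∑ z, w z * g |A i j m * W i j m - M z i j m| := by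
      rw [← swap (fun z i j m => w z * g |A i j m * W i j m - M z i j m|)]
      refine Finset.sum_congr rfl fun z _ => ?_
      simp [tnorm, thad, Finset.mul_sum]
    rw [hlhs]
    calc ∑ i, ∑ j, ∑ m, ∑ z, w z * g |A i j m * W i j m - M z i j m|
        ≤ ∑ i, ∑ j, ∑ m, (g |(A i j m - Lγ i j m) * W i j m|
            + ε₁ * g |A i j m * W i j m| + ε₂ * g |Lγ i j m * (1 - W i j m)|) := by
          refine Finset.sum_le_sum fun i _ => Finset.sum_le_sum fun j _ =>
            Finset.sum_le_sum fun m _ => key i j m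
      _ = tnorm g (thad (A - Lγ) W) + ε₁ * tnorm g (thad A W)
            + ε₂ * tnorm g (thad Lγ (tOneSub W)) := by
          simp [tnorm, thad, tOneSub, Finset.sum_add_distrib, Finset.mul_sum]
  -- combine
  have hchain : tnorm g (thad (A - L) W) ≤
      tnorm g (thad (A - Lγ) W) + ε₁ * tnorm g (thad A W)
        + ε₂ * tnorm g (thad Lγ (tOneSub W)) + ε₃ * tnorm g (thad A W) := by
    calc tnorm g (thad (A - L) W) ≤ tnorm g (thad A W - L) := step1
      _ ≤ OPTk' + ε₃ * tnorm g (thad A W) := hL_near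
      _ ≤ (∑ z, w z * tnorm g (thad A W - M z)) + ε₃ * tnorm g (thad A W) := by
          linarith
      _ ≤ tnorm g (thad (A - Lγ) W) + ε₁ * tnorm g (thad A W)
            + ε₂ * tnorm g (thad Lγ (tOneSub W)) + ε₃ * tnorm g (thad A W) := by
          linarith
  linarith [hchain, hLγ]
end

section
/- Masked Boolean low-rank approximation from rectangle covers: Let A, W ∈ {0,1}^{n×n}. Suppose the support {(i,j) : W_{i,j} = 1} is the union of r (possibly overlapping) combinatorial rectangles, each of which is contained in the support of W. Then for every k' ≥ r·k, if U ∈ {0,1}^{n×k'} and V ∈ {0,1}^{k'×n} satisfy ‖A ∘ W − U·V‖₀ ≤ (min over Û ∈ {0,1}^{n×k'}, V̂ ∈ {0,1}^{k'×n} of ‖A ∘ W − Û·V̂‖₀) + Δ for some Δ ≥ 0, then ‖W ∘ (A − U·V)‖₀ ≤ r·OPT + Δ, where OPT = min over Û ∈ {0,1}^{n×k}, V̂ ∈ {0,1}^{k×n} of ‖W ∘ (A − Û·V̂)‖₀. -/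
open BigOperators

/-- Boolean matrix product: `(U·V)_{i,j} = 1` iff `∃ l, U_{i,l} = 1 ∧ V_{l,j} = 1`. -/
def bMul {n k : ℕ} (U : Fin n → Fin k → Bool) (V : Fin k → Fin n → Bool) :
    Fin n → Fin n → Bool :=
  fun i j => decide (∃ l, U i l = true ∧ V l j = true)

/-- Entrywise AND (Hadamard product of Boolean matrices). -/
def bHad {n : ℕ} (M N : Fin n → Fin n → Bool) : Fin n → Fin n → Bool :=
  fun i j => M i j && N i j

/-- `‖M − N‖₀`: the number of entries where the Boolean matrices `M` and `N` differ. -/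
def l0diff {n : ℕ} (M N : Fin n → Fin n → Bool) : ℕ :=
  (Finset.univ.filter fun p : Fin n × Fin n => M p.1 p.2 ≠ N p.1 p.2).card

/-- `‖W ∘ (M − N)‖₀`: the number of entries in the support of `W` where `M` and `N` differ. -/
def l0maskdiff {n : ℕ} (W M N : Fin n → Fin n → Bool) : ℕ :=
  (Finset.univ.filter fun p : Fin n × Fin n =>
    W p.1 p.2 = true ∧ M p.1 p.2 ≠ N p.1 p.2).card

/-- masked Boolean low-rank approximation from rectangle covers. -/
theorem stmt8
    {n k k' r : ℕ}
    (A W : Fin n → Fin n → Bool)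
    (S T : Fin r → Set (Fin n))
    (h_cover : ∀ i j, W i j = true ↔ ∃ c, i ∈ S c ∧ j ∈ T c)
    (hk' : r * k ≤ k') (Δ : ℕ)
    (U : Fin n → Fin k' → Bool) (V : Fin k' → Fin n → Bool)
    (hUV : l0diff (bHad A W) (bMul U V) ≤
      sInf {x : ℕ | ∃ (U' : Fin n → Fin k' → Bool) (V' : Fin k' → Fin n → Bool),
        x = l0diff (bHad A W) (bMul U' V')} + Δ) :
    l0maskdiff W A (bMul U V) ≤
      r * sInf {x : ℕ | ∃ (U' : Fin n → Fin k → Bool) (V' : Fin k → Fin n → Bool),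
        x = l0maskdiff W A (bMul U' V')} + Δ := by
  classical
  set OPT := sInf {x : ℕ | ∃ (U' : Fin n → Fin k → Bool) (V' : Fin k → Fin n → Bool),
      x = l0maskdiff W A (bMul U' V')} with hOPTdef
  -- Step 1: masked error is at most the error against the masked target.
  have h1 : l0maskdiff W A (bMul U V) ≤ l0diff (bHad A W) (bMul U V) := by
    apply Finset.card_le_card
    intro p hp
    simp only [Finset.mem_filter, Finset.mem_univ, true_and] at hp ⊢
    obtain ⟨hW, hne⟩ := hp
    simpa [bHad, hW] using hne
  -- Step 2: pick an optimal rank-k factorization.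
  have hsetne : ({x : ℕ | ∃ (U' : Fin n → Fin k → Bool) (V' : Fin k → Fin n → Bool),
      x = l0maskdiff W A (bMul U' V')} : Set ℕ).Nonempty :=
    ⟨_, fun _ _ => false, fun _ _ => false, rfl⟩
  obtain ⟨Uo, Vo, hopt⟩ := Nat.sInf_mem hsetne
  rw [← hOPTdef] at hopt
  -- Step 3: build the width-k' factorization.
  let Us : Fin n → Fin k' → Bool := fun i l =>
    if h : (l : ℕ) < r * k then
      decide (i ∈ S (finProdFinEquiv.symm (⟨(l : ℕ), h⟩ : Fin (r * k))).1) &&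
        Uo i (finProdFinEquiv.symm (⟨(l : ℕ), h⟩ : Fin (r * k))).2
    else false
  let Vs : Fin k' → Fin n → Bool := fun l j =>
    if h : (l : ℕ) < r * k then
      decide (j ∈ T (finProdFinEquiv.symm (⟨(l : ℕ), h⟩ : Fin (r * k))).1) &&
        Vo (finProdFinEquiv.symm (⟨(l : ℕ), h⟩ : Fin (r * k))).2 j
    else false
  have hprod : ∀ i j, bMul Us Vs i j = (W i j && bMul Uo Vo i j) := by
    intro i j
    rw [Bool.eq_iff_iff]
    simp only [bMul, Bool.and_eq_true, decide_eq_true_eq]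
    constructor
    · rintro ⟨l, hu, hv⟩
      simp only [Us, Vs] at hu hv
      by_cases h : (l : ℕ) < r * k
      · rw [dif_pos h] at hu hv
        simp only [Bool.and_eq_true, decide_eq_true_eq] at hu hv
        refine ⟨(h_cover i j).2 ⟨_, hu.1, hv.1⟩, _, hu.2, hv.2⟩
      · rw [dif_neg h] at hu; exact absurd hu (by simp)
    · rintro ⟨hW, l0, hu, hv⟩
      obtain ⟨c, hS, hT⟩ := (h_cover i j).1 hW
      refine ⟨Fin.castLE hk' (finProdFinEquiv (c, l0)), ?_, ?_⟩ <;>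
      · simp only [Us, Vs]
        have h : ((Fin.castLE hk' (finProdFinEquiv (c, l0)) : Fin k') : ℕ) < r * k :=
          (finProdFinEquiv (c, l0)).isLt
        rw [dif_pos h]
        have he : (⟨((Fin.castLE hk' (finProdFinEquiv (c, l0)) : Fin k') : ℕ), h⟩ :
            Fin (r * k)) = finProdFinEquiv (c, l0) := by
          apply Fin.ext; rfl
        rw [he, Equiv.symm_apply_apply]
        simp [hS, hT, hu, hv]
  -- Step 4: the new factorization's error equals OPT.
  have h2 : l0diff (bHad A W) (bMul Us Vs) = l0maskdiff W A (bMul Uo Vo) := by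
    unfold l0diff l0maskdiff
    congr 1
    ext p
    simp only [Finset.mem_filter, Finset.mem_univ, true_and, hprod]
    cases hW : W p.1 p.2 <;> simp [bHad, hW]
  have h3 : sInf {x : ℕ | ∃ (U' : Fin n → Fin k' → Bool) (V' : Fin k' → Fin n → Bool),
      x = l0diff (bHad A W) (bMul U' V')} ≤ OPT :=
    Nat.sInf_le ⟨Us, Vs, by rw [h2, ← hopt]⟩
  -- Step 5: conclude, splitting on r = 0.
  rcases Nat.eq_zero_or_pos r with hr | hr
  · have hW0 : ∀ i j, W i j = false := by
      intro i j
      by_contra h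
      obtain ⟨c, -⟩ := (h_cover i j).1 (by simpa using h)
      exact absurd c.isLt (by omega)
    have : l0maskdiff W A (bMul U V) = 0 := by
      unfold l0maskdiff
      simp [hW0]
    omega
  · have h4 : OPT ≤ r * OPT := Nat.le_mul_of_pos_left OPT hr
    calc l0maskdiff W A (bMul U V) ≤ l0diff (bHad A W) (bMul U V) := h1
      _ ≤ sInf {x : ℕ | ∃ (U' : Fin n → Fin k' → Bool) (V' : Fin k' → Fin n → Bool),
          x = l0diff (bHad A W) (bMul U' V')} + Δ := hUV
      _ ≤ OPT + Δ := by omega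
      _ ≤ r * OPT + Δ := by omega
end

section
/- Projection-cost inequality: Let F ∈ ℝ^{m×p}, let k ≥ 1, let ε ∈ (0,1), and set r = ⌈k/ε⌉ with r ≤ m. Suppose U ∈ ℝ^{m×r} has orthonormal columns and minimizes ‖F − UUᵀF‖_F over all m×r matrices with orthonormal columns (equivalently, UUᵀF is a best rank-r approximation of F in Frobenius norm among matrices of the form (orthogonal projection)·F). Then for every Q ∈ ℝ^{p×k} with orthonormal columns, ‖(F − UUᵀF)·QQᵀ‖_F² ≤ (ε/(1−ε)) · min over matrices G of rank at most k of ‖F − G‖_F². -/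
open Matrix BigOperators

/-- Squared Frobenius norm. -/
noncomputable def frob2 {n p : ℕ} (M : Matrix (Fin n) (Fin p) ℝ) : ℝ :=
  ∑ i, ∑ j, (M i j) ^ 2

lemma frob2_nonneg {n p : ℕ} (M : Matrix (Fin n) (Fin p) ℝ) : 0 ≤ frob2 M := by
  refine Finset.sum_nonneg fun i _ => Finset.sum_nonneg fun j _ => sq_nonneg _

lemma frob2_eq_trace {n p : ℕ} (M : Matrix (Fin n) (Fin p) ℝ) :
    frob2 M = trace (M * Mᵀ) := by
  simp [frob2, trace, mul_apply, Matrix.diag, sq]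

lemma diag_mul_transpose_nonneg {a b : ℕ} (M : Matrix (Fin a) (Fin b) ℝ) (i : Fin a) :
    0 ≤ (M * Mᵀ) i i := by
  simp only [mul_apply, transpose_apply]
  exact Finset.sum_nonneg fun j _ => mul_self_nonneg _

lemma trace_conj_diag {m s : ℕ} (μ : Fin m → ℝ) (M : Matrix (Fin m) (Fin s) ℝ) :
    trace (Mᵀ * diagonal μ * M) = ∑ i, μ i * (∑ j, (M i j)^2) := by
  simp only [trace, Matrix.diag, mul_apply, transpose_apply, diagonal, of_apply]
  rw [Finset.sum_comm]
  congr 1; ext i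
  rw [Finset.mul_sum]
  congr 1; ext j
  rw [Finset.sum_eq_single i]
  · simp; ring
  · intro b _ hb; simp [hb]
  · simp

lemma filter_lt_eq_map {m s : ℕ} (hs : s ≤ m) :
    (Finset.univ.filter fun i : Fin m => (i:ℕ) < s) =
      Finset.univ.map (Fin.castLEEmb hs) := by
  ext i
  simp only [Finset.mem_filter, Finset.mem_univ, true_and, Finset.mem_map,
    Fin.castLEEmb_apply]
  constructor
  · intro h; exact ⟨⟨i, h⟩, by simp [Fin.castLE]⟩
  · rintro ⟨j, rfl⟩; simpa using j.2

lemma card_filter_lt {m : ℕ} (s : ℕ) (hs : s ≤ m) :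
    (Finset.univ.filter fun i : Fin m => (i:ℕ) < s).card = s := by
  rw [filter_lt_eq_map hs]; simp

lemma comb_upper {m : ℕ} (μ : Fin m → ℝ) (hμ : Antitone μ) (c : Fin m → ℝ)
    (hc0 : ∀ i, 0 ≤ c i) (hc1 : ∀ i, c i ≤ 1) (s : ℕ) (hs : s ≤ m)
    (hsum : ∑ i, c i = s) :
    ∑ i, μ i * c i ≤ ∑ i ∈ Finset.univ.filter (fun i : Fin m => (i:ℕ) < s), μ i := by
  rcases eq_or_lt_of_le hs with h | h
  · subst h
    have hall : ∀ i : Fin s, c i = 1 := by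
      have h0 : ∑ i : Fin s, (1 - c i) = 0 := by
        rw [Finset.sum_sub_distrib, hsum]; simp
      intro i
      have := (Finset.sum_eq_zero_iff_of_nonneg
        (fun i _ => by linarith [hc1 i])).mp h0 i (Finset.mem_univ i)
      linarith
    have heq : (Finset.univ.filter fun i : Fin s => (i:ℕ) < s) = Finset.univ := by
      ext i; simp [i.2]
    rw [heq]
    refine Finset.sum_le_sum fun i _ => ?_
    rw [hall i, mul_one]
  · set t := μ ⟨s, h⟩ with ht
    have key : ∀ i : Fin m, μ i * c i - (if (i:ℕ) < s then μ i else 0) ≤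
        t * c i - (if (i:ℕ) < s then t else 0) := by
      intro i
      by_cases hi : (i:ℕ) < s
      · simp only [hi, if_true]
        have hmu : t ≤ μ i := hμ (show i ≤ ⟨s, h⟩ from Fin.mk_le_mk.mpr (le_of_lt hi) |>.trans le_rfl)
        nlinarith [hc1 i, hc0 i]
      · simp only [hi, if_false]
        have hmu : μ i ≤ t := hμ (show (⟨s, h⟩ : Fin m) ≤ i from Fin.mk_le_mk.mpr (le_of_not_gt hi) |>.trans le_rfl)
        nlinarith [hc0 i]
    have hst : ∑ i : Fin m, (if (i:ℕ) < s then t else 0) = t * s := by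
      rw [← Finset.sum_filter, Finset.sum_const, card_filter_lt s hs, nsmul_eq_mul, mul_comm]
    have hmus : ∑ i ∈ Finset.univ.filter (fun i : Fin m => (i:ℕ) < s), μ i
        = ∑ i : Fin m, (if (i:ℕ) < s then μ i else 0) := (Finset.sum_filter _ _)
    have hsumkey := Finset.sum_le_sum (fun i (_ : i ∈ Finset.univ) => key i)
    rw [Finset.sum_sub_distrib, Finset.sum_sub_distrib, hst, ← Finset.mul_sum, hsum] at hsumkey
    rw [hmus]
    linarith

lemma perm_decomp {m : ℕ} (V : Matrix (Fin m) (Fin m) ℝ) (d : Fin m → ℝ)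
    (σ : Equiv.Perm (Fin m)) :
    V * diagonal d * Vᵀ = (V.submatrix id σ) * diagonal (d ∘ σ) * (V.submatrix id σ)ᵀ := by
  ext i j
  rw [mul_apply, mul_apply]
  simp only [mul_diagonal, transpose_apply, submatrix_apply, id_eq, Function.comp]
  exact (Equiv.sum_comp σ (fun x => V i x * d x * V j x)).symm

lemma submatrix_perm_orthL {m : ℕ} (V : Matrix (Fin m) (Fin m) ℝ) (σ : Equiv.Perm (Fin m))
    (h : Vᵀ * V = 1) : (V.submatrix id σ)ᵀ * (V.submatrix id σ) = 1 := by
  ext a b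
  have := congrFun (congrFun h (σ a)) (σ b)
  simp only [mul_apply, transpose_apply, submatrix_apply, id_eq] at this ⊢
  rw [this]
  simp [Matrix.one_apply, Equiv.apply_eq_iff_eq]

lemma submatrix_perm_orthR {m : ℕ} (V : Matrix (Fin m) (Fin m) ℝ) (σ : Equiv.Perm (Fin m))
    (h : V * Vᵀ = 1) : (V.submatrix id σ) * (V.submatrix id σ)ᵀ = 1 := by
  ext a b
  have := congrFun (congrFun h a) b
  simp only [mul_apply, transpose_apply, submatrix_apply, id_eq] at this ⊢
  rw [← this, ← Equiv.sum_comp σ (fun x => V a x * V b x)]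

lemma exists_spectral {m p : ℕ} (F : Matrix (Fin m) (Fin p) ℝ) :
    ∃ (V : Matrix (Fin m) (Fin m) ℝ) (μ : Fin m → ℝ),
      Vᵀ * V = 1 ∧ V * Vᵀ = 1 ∧ Antitone μ ∧ (∀ i, 0 ≤ μ i) ∧
      F * Fᵀ = V * diagonal μ * Vᵀ := by
  have hH : (F * Fᵀ).IsHermitian := by
    have : Fᴴ = Fᵀ := Matrix.conjTranspose_eq_transpose_of_trivial F
    simpa [this] using Matrix.isHermitian_mul_conjTranspose_self F
  set V0 : Matrix (Fin m) (Fin m) ℝ := (Matrix.IsHermitian.eigenvectorUnitary hH : Matrix (Fin m) (Fin m) ℝ)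
  have hV0L : V0ᵀ * V0 = 1 := by
    have := Matrix.mem_unitaryGroup_iff'.mp (Matrix.IsHermitian.eigenvectorUnitary hH).2
    simpa [Matrix.star_eq_conjTranspose, Matrix.conjTranspose_eq_transpose_of_trivial] using this
  have hV0R : V0 * V0ᵀ = 1 := by
    have := Matrix.mem_unitaryGroup_iff.mp (Matrix.IsHermitian.eigenvectorUnitary hH).2
    simpa [Matrix.star_eq_conjTranspose, Matrix.conjTranspose_eq_transpose_of_trivial] using this
  have hdec : F * Fᵀ = V0 * diagonal hH.eigenvalues * V0ᵀ := by
    have := hH.spectral_theorem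
    simpa [Matrix.star_eq_conjTranspose, Matrix.conjTranspose_eq_transpose_of_trivial,
      Function.comp] using this
  -- sort eigenvalues antitone
  set d := hH.eigenvalues
  set σ : Equiv.Perm (Fin m) := Tuple.sort (fun i => -(d i))
  have hanti : Antitone (d ∘ σ) := by
    have hm := Tuple.monotone_sort (fun i => -(d i))
    intro a b hab
    have := hm hab
    simp only [Function.comp] at this ⊢
    linarith
  refine ⟨V0.submatrix id σ, d ∘ σ, submatrix_perm_orthL V0 σ hV0L,
    submatrix_perm_orthR V0 σ hV0R, hanti, ?_, by rw [hdec, perm_decomp]⟩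
  intro i
  have hPSD : (F * Fᵀ).PosSemidef := by
    have : Fᴴ = Fᵀ := Matrix.conjTranspose_eq_transpose_of_trivial F
    simpa [this] using Matrix.posSemidef_self_mul_conjTranspose F
  exact hPSD.eigenvalues_nonneg (σ i)

lemma kyfan_upper {m s : ℕ} (A V : Matrix (Fin m) (Fin m) ℝ) (μ : Fin m → ℝ)
    (hV1 : Vᵀ * V = 1) (hV2 : V * Vᵀ = 1) (hμ : Antitone μ)
    (hA : A = V * diagonal μ * Vᵀ) (hs : s ≤ m)
    (W : Matrix (Fin m) (Fin s) ℝ) (hW : Wᵀ * W = 1) :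
    trace (Wᵀ * A * W) ≤ ∑ i ∈ Finset.univ.filter (fun i : Fin m => (i:ℕ) < s), μ i := by
  set M : Matrix (Fin m) (Fin s) ℝ := Vᵀ * W with hM
  have htr : trace (Wᵀ * A * W) = ∑ i, μ i * (∑ j, (M i j)^2) := by
    rw [hA]
    have : Wᵀ * (V * diagonal μ * Vᵀ) * W = Mᵀ * diagonal μ * M := by
      rw [hM, transpose_mul, transpose_transpose]
      simp only [Matrix.mul_assoc]
    rw [this, trace_conj_diag]
  set c : Fin m → ℝ := fun i => ∑ j, (M i j)^2 with hc
  have hc0 : ∀ i, 0 ≤ c i := fun i => Finset.sum_nonneg fun j _ => sq_nonneg _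
  have hcdiag : ∀ i, c i = (M * Mᵀ) i i := by
    intro i; simp [hc, mul_apply, sq]
  have hc1 : ∀ i, c i ≤ 1 := by
    intro i
    set N : Matrix (Fin m) (Fin m) ℝ := V - W * (Wᵀ * V) with hN
    have hNN : Nᵀ * N = 1 - M * Mᵀ := by
      rw [hN, hM]
      have hWW : ∀ (X : Matrix (Fin s) (Fin m) ℝ), Wᵀ * (W * X) = X := fun X => by
        rw [← Matrix.mul_assoc, hW, Matrix.one_mul]
      simp only [transpose_sub, transpose_mul, transpose_transpose, Matrix.sub_mul,
        Matrix.mul_sub, Matrix.mul_assoc, hWW, hV1]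
      abel
    have h0 : 0 ≤ (Nᵀ * N) i i := by
      have := diag_mul_transpose_nonneg Nᵀ i
      rwa [transpose_transpose] at this
    rw [hNN] at h0
    have : (1 - M * Mᵀ : Matrix (Fin m) (Fin m) ℝ) i i = 1 - (M * Mᵀ) i i := by
      simp [Matrix.sub_apply, Matrix.one_apply]
    rw [this] at h0
    rw [hcdiag i]; linarith
  have hcsum : ∑ i, c i = s := by
    have : ∑ i, c i = trace (M * Mᵀ) := by
      simp [trace, Matrix.diag, hcdiag]
    rw [this, hM, transpose_mul, transpose_transpose, Matrix.trace_mul_comm]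
    have h2 : V * (Vᵀ * W) = W := by rw [← Matrix.mul_assoc, hV2, Matrix.one_mul]
    rw [Matrix.mul_assoc, h2, hW, trace_one]
    simp
  rw [htr]
  exact comb_upper μ hμ c hc0 hc1 s hs hcsum

lemma kyfan_exists {m s : ℕ} (A V : Matrix (Fin m) (Fin m) ℝ) (μ : Fin m → ℝ)
    (hV1 : Vᵀ * V = 1)
    (hA : A = V * diagonal μ * Vᵀ) (hs : s ≤ m) :
    ∃ W : Matrix (Fin m) (Fin s) ℝ, Wᵀ * W = 1 ∧
      trace (Wᵀ * A * W) = ∑ i ∈ Finset.univ.filter (fun i : Fin m => (i:ℕ) < s), μ i := by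
  set W : Matrix (Fin m) (Fin s) ℝ := V.submatrix id (Fin.castLE hs) with hWdef
  have hVW : Vᵀ * W = (1 : Matrix (Fin m) (Fin m) ℝ).submatrix id (Fin.castLE hs) := by
    ext a j
    have := congrFun (congrFun hV1 a) (Fin.castLE hs j)
    simp only [hWdef, mul_apply, submatrix_apply, transpose_apply] at this ⊢
    exact this
  have hW : Wᵀ * W = 1 := by
    ext a b
    have h1 : (Wᵀ * W) a b = (Vᵀ * W) (Fin.castLE hs a) b := by
      simp [hWdef, mul_apply, submatrix_apply]
    rw [h1, hVW]
    simp only [submatrix_apply, id_eq, Matrix.one_apply]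
    by_cases hab : a = b
    · simp [hab]
    · have : Fin.castLE hs a ≠ Fin.castLE hs b := by
        simp [Fin.ext_iff] at hab ⊢; omega
      simp [this, hab]
  refine ⟨W, hW, ?_⟩
  have htr : Wᵀ * A * W = (Vᵀ*W)ᵀ * diagonal μ * (Vᵀ*W) := by
    rw [hA, transpose_mul, transpose_transpose]
    simp only [Matrix.mul_assoc]
  rw [htr, trace_conj_diag, hVW]
  have hcval : ∀ i : Fin m, (∑ j : Fin s,
      ((1 : Matrix (Fin m) (Fin m) ℝ).submatrix id (Fin.castLE hs) i j)^2)
      = if (i:ℕ) < s then 1 else 0 := by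
    intro i
    by_cases hi : (i:ℕ) < s
    · rw [Finset.sum_eq_single ⟨i, hi⟩]
      · simp [Matrix.one_apply, Fin.ext_iff, hi]
      · intro b _ hb
        simp only [submatrix_apply, id_eq, Matrix.one_apply]
        have : i ≠ Fin.castLE hs b := by
          simp [Fin.ext_iff] at hb ⊢; omega
        simp [this]
      · simp
    · rw [Finset.sum_eq_zero, if_neg hi]
      intro b _
      simp only [submatrix_apply, id_eq, Matrix.one_apply]
      have : i ≠ Fin.castLE hs b := by
        simp [Fin.ext_iff]; omega
      simp [this]
  rw [Finset.sum_congr rfl (fun i _ => by rw [hcval i]), Finset.sum_filter]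
  congr 1; ext i
  by_cases hi : (i:ℕ) < s <;> simp [hi]

lemma trace_c {m s : ℕ} (A V : Matrix (Fin m) (Fin m) ℝ) (μ : Fin m → ℝ)
    (hV1 : Vᵀ * V = 1) (hV2 : V * Vᵀ = 1)
    (hA : A = V * diagonal μ * Vᵀ)
    (W : Matrix (Fin m) (Fin s) ℝ) (hW : Wᵀ * W = 1) :
    ∃ c : Fin m → ℝ, (∀ i, 0 ≤ c i) ∧ (∀ i, c i ≤ 1) ∧ (∑ i, c i = s) ∧
      trace (Wᵀ * A * W) = ∑ i, μ i * c i := by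
  set M : Matrix (Fin m) (Fin s) ℝ := Vᵀ * W with hM
  have htr : trace (Wᵀ * A * W) = ∑ i, μ i * (∑ j, (M i j)^2) := by
    rw [hA]
    have : Wᵀ * (V * diagonal μ * Vᵀ) * W = Mᵀ * diagonal μ * M := by
      rw [hM, transpose_mul, transpose_transpose]
      simp only [Matrix.mul_assoc]
    rw [this, trace_conj_diag]
  set c : Fin m → ℝ := fun i => ∑ j, (M i j)^2 with hc
  have hc0 : ∀ i, 0 ≤ c i := fun i => Finset.sum_nonneg fun j _ => sq_nonneg _
  have hcdiag : ∀ i, c i = (M * Mᵀ) i i := by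
    intro i; simp [hc, mul_apply, sq]
  have hc1 : ∀ i, c i ≤ 1 := by
    intro i
    set N : Matrix (Fin m) (Fin m) ℝ := V - W * (Wᵀ * V) with hN
    have hNN : Nᵀ * N = 1 - M * Mᵀ := by
      rw [hN, hM]
      have hWW : ∀ (X : Matrix (Fin s) (Fin m) ℝ), Wᵀ * (W * X) = X := fun X => by
        rw [← Matrix.mul_assoc, hW, Matrix.one_mul]
      simp only [transpose_sub, transpose_mul, transpose_transpose, Matrix.sub_mul,
        Matrix.mul_sub, Matrix.mul_assoc, hWW, hV1]
      abel
    have h0 : 0 ≤ (Nᵀ * N) i i := by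
      have := diag_mul_transpose_nonneg Nᵀ i
      rwa [transpose_transpose] at this
    rw [hNN] at h0
    have : (1 - M * Mᵀ : Matrix (Fin m) (Fin m) ℝ) i i = 1 - (M * Mᵀ) i i := by
      simp [Matrix.sub_apply, Matrix.one_apply]
    rw [this] at h0
    rw [hcdiag i]; linarith
  have hcsum : ∑ i, c i = s := by
    have : ∑ i, c i = trace (M * Mᵀ) := by
      simp [trace, Matrix.diag, hcdiag]
    rw [this, hM, transpose_mul, transpose_transpose, Matrix.trace_mul_comm]
    have h2 : V * (Vᵀ * W) = W := by rw [← Matrix.mul_assoc, hV2, Matrix.one_mul]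
    rw [Matrix.mul_assoc, h2, hW, trace_one]
    simp
  exact ⟨c, hc0, hc1, hcsum, htr⟩

lemma kyfan_lower {m s : ℕ} (A V : Matrix (Fin m) (Fin m) ℝ) (μ : Fin m → ℝ)
    (hV1 : Vᵀ * V = 1) (hV2 : V * Vᵀ = 1) (hμ : Antitone μ)
    (hA : A = V * diagonal μ * Vᵀ) (hs : s ≤ m)
    (W : Matrix (Fin m) (Fin s) ℝ) (hW : Wᵀ * W = 1) :
    ∑ i ∈ Finset.univ.filter (fun i : Fin m => ¬ ((i:ℕ) < m - s)), μ i
      ≤ trace (Wᵀ * A * W) := by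
  obtain ⟨c, hc0, hc1, hcsum, htr⟩ := trace_c A V μ hV1 hV2 hA W hW
  set c' : Fin m → ℝ := fun i => 1 - c i with hc'
  have h1 : ∑ i, μ i * c' i ≤
      ∑ i ∈ Finset.univ.filter (fun i : Fin m => (i:ℕ) < m - s), μ i := by
    refine comb_upper μ hμ c' (fun i => by simp [hc']; linarith [hc1 i])
      (fun i => by simp [hc']; linarith [hc0 i]) (m - s) (Nat.sub_le m s) ?_
    rw [hc']
    rw [Finset.sum_sub_distrib, hcsum]
    simp [Nat.cast_sub hs]
  have h2 : ∑ i, μ i * c i = ∑ i, μ i - ∑ i, μ i * c' i := by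
    rw [← Finset.sum_sub_distrib]
    congr 1; ext i; rw [hc']; ring
  have h3 : (∑ i, μ i) = ∑ i ∈ Finset.univ.filter (fun i : Fin m => (i:ℕ) < m - s), μ i
      + ∑ i ∈ Finset.univ.filter (fun i : Fin m => ¬ ((i:ℕ) < m - s)), μ i :=
    (Finset.sum_filter_add_sum_filter_not _ _ _).symm
  rw [htr, h2, h3]
  linarith

lemma frob2_mul_orthT {n p k : ℕ} (M : Matrix (Fin n) (Fin k) ℝ)
    (Q : Matrix (Fin p) (Fin k) ℝ) (hQ : Qᵀ * Q = 1) :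
    frob2 (M * Qᵀ) = frob2 M := by
  rw [frob2_eq_trace, frob2_eq_trace, transpose_mul, transpose_transpose,
    Matrix.mul_assoc, ← Matrix.mul_assoc Qᵀ Q Mᵀ, hQ, Matrix.one_mul]

lemma proj_frob {m p r : ℕ} (F : Matrix (Fin m) (Fin p) ℝ)
    (W : Matrix (Fin m) (Fin r) ℝ) (hW : Wᵀ * W = 1) :
    frob2 (F - W * Wᵀ * F) = trace (F * Fᵀ) - trace (Wᵀ * (F * Fᵀ) * W) := by
  rw [frob2_eq_trace]
  set P : Matrix (Fin m) (Fin m) ℝ := W * Wᵀ with hP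
  have hPP : P * P = P := by
    rw [hP, Matrix.mul_assoc, ← Matrix.mul_assoc Wᵀ W Wᵀ, hW, Matrix.one_mul]
  have hPt : Pᵀ = P := by rw [hP, transpose_mul, transpose_transpose]
  have hT : trace (Wᵀ * (F * Fᵀ) * W) = trace (F * Fᵀ * P) := by
    rw [Matrix.mul_assoc, Matrix.trace_mul_comm, Matrix.mul_assoc, hP, Matrix.mul_assoc]
  have hexp : (F - P * F) * (F - P * F)ᵀ
      = F * Fᵀ - F * (Fᵀ * P) - P * (F * Fᵀ) + P * (F * (Fᵀ * P)) := by
    simp only [transpose_sub, transpose_mul, hPt, Matrix.sub_mul, Matrix.mul_sub,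
      Matrix.mul_assoc]
    abel
  have h1 : trace (F * (Fᵀ * P)) = trace (F * Fᵀ * P) := by rw [Matrix.mul_assoc]
  have h2 : trace (P * (F * Fᵀ)) = trace (F * Fᵀ * P) := Matrix.trace_mul_comm _ _
  have h3 : trace (P * (F * (Fᵀ * P))) = trace (F * Fᵀ * P) := by
    rw [Matrix.trace_mul_comm]
    rw [show F * (Fᵀ * P) * P = F * Fᵀ * (P * P) by simp only [Matrix.mul_assoc]]
    rw [hPP, ← Matrix.mul_assoc]
  rw [hexp, trace_add, trace_sub, trace_sub, h1, h2, h3, hT]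
  ring

lemma frob2_ge_compress {m p s : ℕ} (M : Matrix (Fin m) (Fin p) ℝ)
    (W : Matrix (Fin m) (Fin s) ℝ) (hW : Wᵀ * W = 1) :
    trace (Wᵀ * (M * Mᵀ) * W) ≤ frob2 M := by
  have h := proj_frob M W hW
  have h2 := frob2_nonneg (M - W * Wᵀ * M)
  rw [h] at h2
  rw [frob2_eq_trace]
  linarith

lemma sum_sq_eq_quad {m p : ℕ} (F : Matrix (Fin m) (Fin p) ℝ) (v : Fin m → ℝ) :
    ∑ c, (∑ i, v i * F i c)^2 = ∑ a, ∑ b, v a * (F * Fᵀ) a b * v b := by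
  simp only [sq, Finset.sum_mul_sum, mul_apply, transpose_apply, Finset.mul_sum,
    Finset.sum_mul]
  rw [Finset.sum_comm]
  congr 1; ext a
  rw [Finset.sum_comm]
  congr 1; ext b
  congr 1; ext c
  ring

lemma trace_quadform {m s : ℕ} (A : Matrix (Fin m) (Fin m) ℝ)
    (W : Matrix (Fin m) (Fin s) ℝ) :
    trace (Wᵀ * A * W) = ∑ j, ∑ a, ∑ b, W a j * A a b * W b j := by
  simp only [trace, Matrix.diag, mul_apply, transpose_apply, Finset.sum_mul]
  congr 1; ext j
  rw [Finset.sum_comm]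

lemma spectral_gap {m r : ℕ} (A V : Matrix (Fin m) (Fin m) ℝ) (μ : Fin m → ℝ)
    (hV1 : Vᵀ * V = 1) (hV2 : V * Vᵀ = 1) (hμ : Antitone μ)
    (hA : A = V * diagonal μ * Vᵀ) (hrm : r < m)
    (U : Matrix (Fin m) (Fin r) ℝ) (hU : Uᵀ * U = 1)
    (htr : ∑ i ∈ Finset.univ.filter (fun i : Fin m => (i:ℕ) < r), μ i ≤ trace (Uᵀ * A * U))
    (v : Fin m → ℝ) (hv : ∀ j, ∑ i, U i j * v i = 0) :
    ∑ a, ∑ b, v a * A a b * v b ≤ μ ⟨r, hrm⟩ * (∑ i, v i * v i) := by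
  by_cases hv0 : ∑ i, v i * v i = 0
  · have hz : ∀ i, v i = 0 := by
      intro i
      have := (Finset.sum_eq_zero_iff_of_nonneg
        (fun i _ => mul_self_nonneg (v i))).mp hv0 i (Finset.mem_univ i)
      nlinarith [this]
    rw [hv0, mul_zero]
    rw [Finset.sum_eq_zero]
    intro a _
    rw [Finset.sum_eq_zero]
    intro b _
    rw [hz a]; ring
  · set n2 : ℝ := ∑ i, v i * v i with hn2
    have hn2pos : 0 < n2 := lt_of_le_of_ne
      (Finset.sum_nonneg fun i _ => mul_self_nonneg (v i)) (Ne.symm hv0)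
    set s : ℝ := Real.sqrt n2 with hsq
    have hspos : 0 < s := Real.sqrt_pos.mpr hn2pos
    have hss : s * s = n2 := Real.mul_self_sqrt hn2pos.le
    set W : Matrix (Fin m) (Fin (r+1)) ℝ :=
      Matrix.of (fun i (j : Fin (r+1)) =>
        if h : (j:ℕ) < r then U i ⟨j, h⟩ else v i / s) with hWdef
    have hWcast : ∀ (j : Fin r) (i : Fin m), W i (Fin.castSucc j) = U i j := by
      intro j i
      simp only [hWdef, of_apply, Fin.coe_castSucc, j.2, dif_pos, Fin.eta]
    have hWlast : ∀ i : Fin m, W i (Fin.last r) = v i / s := by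
      intro i
      simp only [hWdef, of_apply, Fin.val_last, lt_irrefl, dif_neg, not_false_iff]
    have hWorth : Wᵀ * W = 1 := by
      ext a b
      simp only [mul_apply, transpose_apply, Matrix.one_apply]
      by_cases ha : (a:ℕ) < r <;> by_cases hb : (b:ℕ) < r
      · have := congrFun (congrFun hU ⟨a, ha⟩) ⟨b, hb⟩
        simp only [mul_apply, transpose_apply, Matrix.one_apply, Fin.mk.injEq] at this
        simp only [hWdef, of_apply, ha, hb, dif_pos]
        rw [this]
        by_cases hab : a = b
        · simp [hab]
        · have : ¬ ((a:ℕ) = (b:ℕ)) := fun h => hab (Fin.ext h)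
          simp [this, hab]
      · have hbl : b = Fin.last r := by
          apply Fin.ext; simp only [Fin.val_last]; omega
        have hab : a ≠ b := by
          intro h; rw [h, hbl] at ha; simp [Fin.val_last] at ha
        rw [if_neg hab]
        subst hbl
        have : ∑ i, W i a * W i (Fin.last r) = (1/s) * ∑ i, U i ⟨a, ha⟩ * v i := by
          rw [Finset.mul_sum]
          congr 1; ext i
          rw [hWlast i]
          simp only [hWdef, of_apply, ha, dif_pos]
          ring
        rw [this, hv ⟨a, ha⟩, mul_zero]
      · have hal : a = Fin.last r := by
          apply Fin.ext; simp only [Fin.val_last]; omega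
        have hab : a ≠ b := by
          intro h; rw [← h, hal] at hb; simp [Fin.val_last] at hb
        rw [if_neg hab]
        subst hal
        have : ∑ i, W i (Fin.last r) * W i b = (1/s) * ∑ i, U i ⟨b, hb⟩ * v i := by
          rw [Finset.mul_sum]
          congr 1; ext i
          rw [hWlast i]
          simp only [hWdef, of_apply, hb, dif_pos]
          ring
        rw [this, hv ⟨b, hb⟩, mul_zero]
      · have hal : a = Fin.last r := by apply Fin.ext; simp only [Fin.val_last]; omega
        have hbl : b = Fin.last r := by apply Fin.ext; simp only [Fin.val_last]; omega
        subst hal; subst hbl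
        rw [if_pos rfl]
        have : ∑ i, W i (Fin.last r) * W i (Fin.last r) = n2 / (s * s) := by
          rw [hn2, Finset.sum_div]
          congr 1; ext i
          rw [hWlast i]
          field_simp
        rw [this, hss, div_self (ne_of_gt hn2pos)]
    have hky := kyfan_upper A V μ hV1 hV2 hμ hA (by omega : r + 1 ≤ m) W hWorth
    have hsplit : trace (Wᵀ * A * W)
        = trace (Uᵀ * A * U) + (∑ a, ∑ b, v a * A a b * v b) / n2 := by
      rw [trace_quadform, trace_quadform, Fin.sum_univ_castSucc]
      congr 1
      · congr 1; ext j
        congr 1; ext a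
        congr 1; ext b
        rw [hWcast j a, hWcast j b]
      · have : ∀ a b : Fin m, W a (Fin.last r) * A a b * W b (Fin.last r)
            = v a * A a b * v b / (s * s) := by
          intro a b
          rw [hWlast a, hWlast b]
          field_simp
        rw [hss] at this
        simp only [this]
        simp only [← Finset.sum_div]
    have hfilt : ∑ i ∈ Finset.univ.filter (fun i : Fin m => (i:ℕ) < r + 1), μ i
        = (∑ i ∈ Finset.univ.filter (fun i : Fin m => (i:ℕ) < r), μ i) + μ ⟨r, hrm⟩ := by
      have hins : Finset.univ.filter (fun i : Fin m => (i:ℕ) < r + 1)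
          = insert (⟨r, hrm⟩ : Fin m) (Finset.univ.filter (fun i : Fin m => (i:ℕ) < r)) := by
        ext i
        simp only [Finset.mem_filter, Finset.mem_univ, true_and, Finset.mem_insert,
          Fin.ext_iff]
        omega
      rw [hins, Finset.sum_insert (by simp)]
      ring
    rw [hsplit] at hky
    rw [hfilt] at hky
    have : (∑ a, ∑ b, v a * A a b * v b) / n2 ≤ μ ⟨r, hrm⟩ := by linarith
    calc ∑ a, ∑ b, v a * A a b * v b = ((∑ a, ∑ b, v a * A a b * v b) / n2) * n2 := by
          field_simp
      _ ≤ μ ⟨r, hrm⟩ * n2 := by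
          exact mul_le_mul_of_nonneg_right this hn2pos.le

lemma rank_bound {m p k : ℕ} (G : Matrix (Fin m) (Fin p) ℝ) (hG : G.rank ≤ k) (hkm : k ≤ m) :
    ∃ W : Matrix (Fin m) (Fin (m - k)) ℝ, Wᵀ * W = 1 ∧ Wᵀ * G = 0 := by
  classical
  set L : (Fin m → ℝ) →ₗ[ℝ] (Fin p → ℝ) := (Gᵀ).mulVecLin with hL
  have hker : m - k ≤ Module.finrank ℝ (LinearMap.ker L) := by
    have h1 := LinearMap.finrank_range_add_finrank_ker L
    have h2 : Module.finrank ℝ (LinearMap.range L) = Gᵀ.rank := rfl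
    have h3 : Gᵀ.rank = G.rank := Matrix.rank_transpose G
    have h4 : Module.finrank ℝ (Fin m → ℝ) = m := by simp
    omega
  set e : EuclideanSpace ℝ (Fin m) ≃ₗ[ℝ] (Fin m → ℝ) := WithLp.linearEquiv 2 ℝ (Fin m → ℝ) with he
  set K' : Submodule ℝ (EuclideanSpace ℝ (Fin m)) := (LinearMap.ker L).comap
    (e : EuclideanSpace ℝ (Fin m) →ₗ[ℝ] (Fin m → ℝ)) with hK'
  have hfr : Module.finrank ℝ K' = Module.finrank ℝ (LinearMap.ker L) := by
    rw [hK', Submodule.comap_equiv_eq_map_symm]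
    exact LinearEquiv.finrank_map_eq e.symm _
  have hle : m - k ≤ Module.finrank ℝ K' := by rw [hfr]; exact hker
  set B := stdOrthonormalBasis ℝ K' with hB
  set g : Fin (m - k) → EuclideanSpace ℝ (Fin m) := fun j => (B (Fin.castLE hle j) : K') with hg
  have hgi : ∀ a b : Fin (m - k),
      (inner ℝ (g a) (g b) : ℝ) = if a = b then 1 else 0 := by
    intro a b
    have h1 := (orthonormal_iff_ite.mp B.orthonormal) (Fin.castLE hle a) (Fin.castLE hle b)
    rw [Submodule.coe_inner] at h1
    rw [hg]
    simp only at h1 ⊢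
    rw [h1]
    by_cases hab : a = b
    · simp [hab]
    · have hne : Fin.castLE hle a ≠ Fin.castLE hle b := by
        intro hcon
        exact hab (Fin.ext (by simpa using congrArg Fin.val hcon))
      simp [hne, hab]
  have hgk : ∀ a : Fin (m - k), Gᵀ *ᵥ (fun i => g a i) = 0 := by
    intro a
    have : g a ∈ K' := (B (Fin.castLE hle a)).2
    rw [hK', Submodule.mem_comap] at this
    rw [LinearMap.mem_ker, hL, Matrix.mulVecLin_apply] at this
    exact this
  refine ⟨Matrix.of (fun i j => g j i), ?_, ?_⟩
  · ext a b
    have := hgi a b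
    simp only [PiLp.inner_apply, RCLike.inner_apply, conj_trivial] at this
    simp only [mul_apply, transpose_apply, of_apply, Matrix.one_apply]
    rw [← this]
    exact Finset.sum_congr rfl fun x _ => mul_comm _ _
  · ext a c
    have := congrFun (hgk a) c
    simp only [Matrix.mulVec, dotProduct, transpose_apply, Pi.zero_apply] at this
    simp only [mul_apply, transpose_apply, of_apply, Matrix.zero_apply]
    rw [← this]
    congr 1; ext i; ring

/-- projection-cost inequality. -/
theorem stmt10
    {m p k r : ℕ} (hk : 1 ≤ k)
    (ε : ℝ) (hε : 0 < ε) (hε1 : ε < 1)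
    (hr : r = ⌈(k : ℝ) / ε⌉₊) (hrm : r ≤ m)
    (F : Matrix (Fin m) (Fin p) ℝ)
    (U : Matrix (Fin m) (Fin r) ℝ) (hUorth : Uᵀ * U = 1)
    (hUopt : ∀ U' : Matrix (Fin m) (Fin r) ℝ, U'ᵀ * U' = 1 →
      frob2 (F - U * Uᵀ * F) ≤ frob2 (F - U' * U'ᵀ * F))
    (Q : Matrix (Fin p) (Fin k) ℝ) (hQorth : Qᵀ * Q = 1) :
    frob2 ((F - U * Uᵀ * F) * (Q * Qᵀ)) ≤
      ε / (1 - ε) * sInf {x : ℝ | ∃ G : Matrix (Fin m) (Fin p) ℝ, G.rank ≤ k ∧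
        x = frob2 (F - G)} := by
  classical
  have h1ε : 0 < 1 - ε := by linarith
  have hεr : (k:ℝ) ≤ ε * r := by
    have h1 : ((k:ℝ)/ε) ≤ (r : ℝ) := by rw [hr]; exact Nat.le_ceil _
    calc (k:ℝ) = ε * ((k:ℝ)/ε) := by field_simp
      _ ≤ ε * r := mul_le_mul_of_nonneg_left h1 hε.le
  have hkr : k < r := by
    by_contra h
    push_neg at h
    have h2 : (r:ℝ) ≤ (k:ℝ) := by exact_mod_cast h
    have h3 : (1:ℝ) ≤ (k:ℝ) := by exact_mod_cast hk
    nlinarith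
  set S : Set ℝ := {x : ℝ | ∃ G : Matrix (Fin m) (Fin p) ℝ, G.rank ≤ k ∧
      x = frob2 (F - G)} with hSdef
  have hSne : S.Nonempty := ⟨frob2 (F - 0), 0, by simp, rfl⟩
  have hS0 : ∀ x ∈ S, 0 ≤ x := by
    rintro x ⟨G, _, rfl⟩
    exact frob2_nonneg _
  rcases eq_or_lt_of_le hrm with hrm' | hrm'
  · -- r = m : projector is identity
    subst hrm'
    have hUU : U * Uᵀ = 1 := mul_eq_one_comm.mp hUorth
    have hz : F - U * Uᵀ * F = 0 := by rw [hUU, Matrix.one_mul, sub_self]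
    rw [hz, Matrix.zero_mul]
    have : frob2 (0 : Matrix (Fin r) (Fin p) ℝ) = 0 := by simp [frob2]
    rw [this]
    exact mul_nonneg (div_nonneg hε.le h1ε.le) (Real.sInf_nonneg hS0)
  · -- main case r < m
    obtain ⟨V, μ, hV1, hV2, hμ, hμ0, hAdec⟩ := exists_spectral F
    set t : ℝ := μ ⟨r, hrm'⟩ with htdef
    have ht0 : 0 ≤ t := hμ0 _
    -- optimality of U gives large trace
    obtain ⟨U', hU'orth, hU'tr⟩ := kyfan_exists (F * Fᵀ) V μ hV1 hAdec (le_of_lt hrm')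
    have hopt := hUopt U' hU'orth
    rw [proj_frob F U hUorth, proj_frob F U' hU'orth] at hopt
    have htrU : ∑ i ∈ Finset.univ.filter (fun i : Fin m => (i:ℕ) < r), μ i
        ≤ trace (Uᵀ * (F * Fᵀ) * U) := by rw [← hU'tr]; linarith
    set E : Matrix (Fin m) (Fin p) ℝ := F - U * Uᵀ * F with hE
    have hUE : Uᵀ * E = 0 := by
      rw [hE, Matrix.mul_sub]
      have h1 : Uᵀ * (U * Uᵀ * F) = Uᵀ * F := by
        rw [show U * Uᵀ * F = U * (Uᵀ * F) by rw [Matrix.mul_assoc],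
          ← Matrix.mul_assoc, hUorth, Matrix.one_mul]
      rw [h1, sub_self]
    -- LHS ≤ k * t
    have hLHS : frob2 (E * (Q * Qᵀ)) ≤ (k:ℝ) * t := by
      rw [show E * (Q * Qᵀ) = (E * Q) * Qᵀ by rw [Matrix.mul_assoc],
        frob2_mul_orthT _ Q hQorth]
      have hswap : frob2 (E * Q) = ∑ j, ∑ i, ((E * Q) i j)^2 := by
        rw [frob2]; exact Finset.sum_comm
      rw [hswap]
      have hcol : ∀ j : Fin k, ∑ i, ((E * Q) i j)^2 ≤ t := by
        intro j
        set v : Fin m → ℝ := fun i => (E * Q) i j with hvdef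
        have hv : ∀ j' : Fin r, ∑ i, U i j' * v i = 0 := by
          have h0 : Uᵀ * (E * Q) = 0 := by
            rw [← Matrix.mul_assoc, hUE, Matrix.zero_mul]
          intro j'
          have := congrFun (congrFun h0 j') j
          simpa [hvdef, mul_apply, transpose_apply] using this
        have hEtE : Eᵀ * E = Fᵀ * E := by
          have h9 : Eᵀ = Fᵀ - Fᵀ * (U * Uᵀ) := by
            rw [hE, transpose_sub, transpose_mul, transpose_mul, transpose_transpose]
          rw [h9, Matrix.sub_mul,
            show Fᵀ * (U * Uᵀ) * E = Fᵀ * U * (Uᵀ * E) by simp only [Matrix.mul_assoc],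
            hUE, Matrix.mul_zero, sub_zero]
        have hnorm : ∑ i, v i * v i = ∑ i, (F * Q) i j * v i := by
          have hEQ : (E * Q)ᵀ * (E * Q) = (F * Q)ᵀ * (E * Q) := by
            rw [transpose_mul, transpose_mul]
            rw [show Qᵀ * Eᵀ * (E * Q) = Qᵀ * (Eᵀ * E) * Q by simp only [Matrix.mul_assoc],
              hEtE]
            simp only [Matrix.mul_assoc]
          have e1 : ∀ (M N : Matrix (Fin m) (Fin k) ℝ), (Mᵀ * N) j j = ∑ i, M i j * N i j := by
            intro M N
            rw [mul_apply]
            simp only [transpose_apply]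
          have h5 := congrFun (congrFun hEQ j) j
          rw [e1 (E * Q) (E * Q), e1 (F * Q) (E * Q)] at h5
          exact h5
        have hq1 : ∑ c, (Q c j)^2 = 1 := by
          have := congrFun (congrFun hQorth j) j
          simp only [mul_apply, transpose_apply, Matrix.one_apply_eq] at this
          rw [← this]
          congr 1; ext c; ring
        have hip : ∑ i, (F * Q) i j * v i = ∑ c, Q c j * (∑ i, v i * F i c) := by
          simp only [mul_apply, Finset.sum_mul, Finset.mul_sum]
          rw [Finset.sum_comm]
          congr 1; ext c
          congr 1; ext i
          ring
        have hCS : (∑ c, Q c j * (∑ i, v i * F i c))^2 ≤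
            (∑ c, (Q c j)^2) * (∑ c, (∑ i, v i * F i c)^2) :=
          Finset.sum_mul_sq_le_sq_mul_sq _ _ _
        have hquad := sum_sq_eq_quad F v
        have hgap := spectral_gap (F * Fᵀ) V μ hV1 hV2 hμ hAdec hrm' U hUorth htrU v hv
        have hn2 : 0 ≤ ∑ i, v i * v i := Finset.sum_nonneg fun i _ => mul_self_nonneg _
        have hsq : ∑ i, ((E * Q) i j)^2 = ∑ i, v i * v i := by
          congr 1; ext i; rw [hvdef]; ring
        rw [hsq]
        have hceq : (∑ i, v i * v i) = ∑ c', Q c' j * (∑ i, v i * F i c') := hnorm.trans hip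
        have hchain : (∑ i, v i * v i) * (∑ i, v i * v i) ≤ t * (∑ i, v i * v i) := by
          have hsq2 : (∑ i, v i * v i) * (∑ i, v i * v i)
              = (∑ c', Q c' j * (∑ i, v i * F i c'))^2 := by rw [hceq]; ring
          rw [hsq2]
          calc (∑ c', Q c' j * (∑ i, v i * F i c'))^2
              ≤ (∑ c, (Q c j)^2) * (∑ c, (∑ i, v i * F i c)^2) := hCS
            _ = ∑ a, ∑ b, v a * (F * Fᵀ) a b * v b := by rw [hq1, one_mul, hquad]
            _ ≤ t * (∑ i, v i * v i) := hgap
        rcases eq_or_lt_of_le hn2 with h0 | h0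
        · rw [← h0]; exact ht0
        · exact le_of_mul_le_mul_right hchain h0
      calc ∑ j, ∑ i, ((E * Q) i j)^2 ≤ ∑ _j : Fin k, t :=
            Finset.sum_le_sum fun j _ => hcol j
        _ = (k:ℝ) * t := by simp [mul_comm]
    -- lower bound on each member of S
    have hkm : k ≤ m := by omega
    have hGbd : ∀ x ∈ S, ((r:ℝ) + 1 - k) * t ≤ x := by
      rintro x ⟨G, hGrank, rfl⟩
      obtain ⟨W, hWorth, hWG⟩ := rank_bound G hGrank hkm
      have h1 : trace (Wᵀ * ((F - G) * (F - G)ᵀ) * W) ≤ frob2 (F - G) :=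
        frob2_ge_compress _ W hWorth
      have h2 : Wᵀ * ((F - G) * (F - G)ᵀ) * W = Wᵀ * (F * Fᵀ) * W := by
        have hWM : Wᵀ * (F - G) = Wᵀ * F := by
          rw [Matrix.mul_sub, hWG, sub_zero]
        have hMW : (F - G)ᵀ * W = Fᵀ * W := by
          have hGW : Gᵀ * W = 0 := by
            rw [show Gᵀ * W = (Wᵀ * G)ᵀ by rw [transpose_mul, transpose_transpose],
              hWG, transpose_zero]
          rw [transpose_sub, Matrix.sub_mul, hGW, sub_zero]
        calc Wᵀ * ((F - G) * (F - G)ᵀ) * W = Wᵀ * (F - G) * ((F - G)ᵀ * W) := by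
              simp only [Matrix.mul_assoc]
          _ = Wᵀ * F * (Fᵀ * W) := by rw [hWM, hMW]
          _ = Wᵀ * (F * Fᵀ) * W := by simp only [Matrix.mul_assoc]
      have h3 := kyfan_lower (F * Fᵀ) V μ hV1 hV2 hμ hAdec (Nat.sub_le m k) W hWorth
      rw [Nat.sub_sub_self hkm] at h3
      -- segment bound
      have hseg : ((r:ℝ) + 1 - k) * t ≤
          ∑ i ∈ Finset.univ.filter (fun i : Fin m => ¬ ((i:ℕ) < k)), μ i := by
        set seg := Finset.univ.filter (fun i : Fin m => k ≤ (i:ℕ) ∧ (i:ℕ) < r + 1) with hsegdef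
        have hsub : seg ⊆ Finset.univ.filter (fun i : Fin m => ¬ ((i:ℕ) < k)) := by
          intro i hi
          simp only [hsegdef, Finset.mem_filter, Finset.mem_univ, true_and] at hi ⊢
          omega
        have hcard : seg.card = r + 1 - k := by
          have : seg = Finset.univ.map
              ⟨fun j : Fin (r + 1 - k) => (⟨k + j, by omega⟩ : Fin m),
                fun a b hab => by
                  simp only [Fin.mk.injEq] at hab
                  exact Fin.ext (by omega)⟩ := by
            ext i
            simp only [hsegdef, Finset.mem_filter, Finset.mem_univ, true_and,
              Finset.mem_map, Function.Embedding.coeFn_mk]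
            constructor
            · rintro ⟨h1', h2'⟩
              refine ⟨⟨(i:ℕ) - k, by omega⟩, Fin.ext ?_⟩
              show k + ((i:ℕ) - k) = (i:ℕ)
              omega
            · rintro ⟨jj, rfl⟩
              change k ≤ k + (jj:ℕ) ∧ k + (jj:ℕ) < r + 1
              have := jj.2
              omega
          rw [this]
          simp
        have hlow : ∀ i ∈ seg, t ≤ μ i := by
          intro i hi
          simp only [hsegdef, Finset.mem_filter, Finset.mem_univ, true_and] at hi
          refine hμ ?_
          rw [Fin.le_def]
          simp
          omega
        calc ((r:ℝ) + 1 - k) * t = seg.card * t := by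
              rw [hcard]
              congr 1
              push_cast [Nat.cast_sub (by omega : k ≤ r + 1)]
              ring
          _ = ∑ _i ∈ seg, t := by rw [Finset.sum_const, nsmul_eq_mul]
          _ ≤ ∑ i ∈ seg, μ i := Finset.sum_le_sum hlow
          _ ≤ ∑ i ∈ Finset.univ.filter (fun i : Fin m => ¬ ((i:ℕ) < k)), μ i :=
              Finset.sum_le_sum_of_subset_of_nonneg hsub (fun i _ _ => hμ0 i)
      rw [h2] at h1
      linarith
    -- conclude
    refine le_trans hLHS ?_
    have hInf : ((r:ℝ) + 1 - k) * t ≤ sInf S := le_csInf hSne hGbd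
    have hconst : (k:ℝ) * t ≤ ε / (1 - ε) * (((r:ℝ) + 1 - k) * t) := by
      rw [div_mul_eq_mul_div, le_div_iff₀ h1ε]
      nlinarith [mul_nonneg ht0 (by linarith : (0:ℝ) ≤ ε * r - k), hε.le]
    calc (k:ℝ) * t ≤ ε / (1 - ε) * (((r:ℝ) + 1 - k) * t) := hconst
      _ ≤ ε / (1 - ε) * sInf S :=
        mul_le_mul_of_nonneg_left hInf (div_nonneg hε.le h1ε.le)
end

section
/- Boolean low-rank plus block diagonal approximation: Let A ∈ {0,1}^{n×n}, let B₁ ∪ … ∪ B_b = [n] be a partition of [n] with b ≥ 2, and let W ∈ {0,1}^{n×n} be defined by W_{i,j} = 0 if i and j lie in the same block and W_{i,j} = 1 otherwise. Then for every k' ≥ 8k⌈log₂ b⌉, if U ∈ {0,1}^{n×k'} and V ∈ {0,1}^{k'×n} satisfy ‖A ∘ W − U·V‖₀ ≤ (min over Û ∈ {0,1}^{n×k'}, V̂ ∈ {0,1}^{k'×n} of ‖A ∘ W − Û·V̂‖₀) + Δ for some Δ ≥ 0, then ‖(A − U·V) ∘ W‖₀ ≤ 8⌈log₂ b⌉·OPT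 + Δ, where OPT = min over Û ∈ {0,1}^{n×k}, V̂ ∈ {0,1}^{k×n} of ‖(A − Û·V̂) ∘ W‖₀. -/
open BigOperators

lemma testbit_ne {L x y : ℕ} (hx : x < 2^L) (hy : y < 2^L) (hxy : x ≠ y) :
    ∃ t, t < L ∧ x.testBit t ≠ y.testBit t := by
  by_contra h
  push_neg at h
  apply hxy
  apply Nat.eq_of_testBit_eq
  intro i
  by_cases hi : i < L
  · exact h i hi
  · rw [Nat.testBit_eq_false_of_lt (lt_of_lt_of_le hx (Nat.pow_le_pow_right (by norm_num) (le_of_not_gt hi))),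
      Nat.testBit_eq_false_of_lt (lt_of_lt_of_le hy (Nat.pow_le_pow_right (by norm_num) (le_of_not_gt hi)))]


/-- Boolean low-rank plus block diagonal approximation. The partition
`B₁ ∪ … ∪ B_b = [n]` is encoded by a surjective block-assignment map `blk : Fin n → Fin b`,
and `⌈log₂ b⌉ = Nat.clog 2 b`. -/
theorem stmt12
    {n b k k' : ℕ} (hb : 2 ≤ b)
    (A : Fin n → Fin n → Bool)
    (blk : Fin n → Fin b) (hblk : Function.Surjective blk)
    (W : Fin n → Fin n → Bool)
    (hW : ∀ i j, W i j = true ↔ blk i ≠ blk j)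
    (hk' : 8 * k * Nat.clog 2 b ≤ k') (Δ : ℕ)
    (U : Fin n → Fin k' → Bool) (V : Fin k' → Fin n → Bool)
    (hUV : l0diff (bHad A W) (bMul U V) ≤
      sInf {x : ℕ | ∃ (U' : Fin n → Fin k' → Bool) (V' : Fin k' → Fin n → Bool),
        x = l0diff (bHad A W) (bMul U' V')} + Δ) :
    l0maskdiff W A (bMul U V) ≤
      8 * Nat.clog 2 b * sInf {x : ℕ | ∃ (U' : Fin n → Fin k → Bool) (V' : Fin k → Fin n → Bool),
        x = l0maskdiff W A (bMul U' V')} + Δ := by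
  classical
  set L := Nat.clog 2 b with hLdef
  have hL1 : 1 ≤ L := Nat.clog_pos (by norm_num) hb
  have hbpow : b ≤ 2 ^ L := Nat.le_pow_clog (by norm_num) b
  -- the rank-k optimum set
  set S : Set ℕ := {x : ℕ | ∃ (U' : Fin n → Fin k → Bool) (V' : Fin k → Fin n → Bool),
        x = l0maskdiff W A (bMul U' V')} with hSdef
  set S' : Set ℕ := {x : ℕ | ∃ (U' : Fin n → Fin k' → Bool) (V' : Fin k' → Fin n → Bool),
        x = l0diff (bHad A W) (bMul U' V')} with hS'def
  have hSne : S.Nonempty := ⟨_, fun _ _ => false, fun _ _ => false, rfl⟩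
  obtain ⟨U₀, V₀, hU₀V₀⟩ := Nat.sInf_mem hSne
  -- embedding of index set
  have hcard : Fintype.card (Fin k × Fin L × Fin 2) ≤ Fintype.card (Fin k') := by
    simp only [Fintype.card_prod, Fintype.card_fin]
    calc k * (L * 2) = 2 * k * L := by ring
    _ ≤ 8 * k * L := by nlinarith
    _ ≤ k' := hk'
  obtain ⟨e⟩ := Function.Embedding.nonempty_of_card_le hcard
  -- bit row/column factors of W
  set rbit : Fin n → Fin L × Fin 2 → Bool :=
    fun i p => ((blk i : ℕ).testBit p.1) == (p.2 == 0) with hrbit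
  set cbit : Fin L × Fin 2 → Fin n → Bool :=
    fun p j => !(((blk j : ℕ).testBit p.1) == (p.2 == 0)) with hcbit
  have hWfact : ∀ i j, (∃ p : Fin L × Fin 2, rbit i p = true ∧ cbit p j = true) ↔ blk i ≠ blk j := by
    intro i j
    constructor
    · rintro ⟨⟨t, s⟩, h1, h2⟩ heq
      simp only [hrbit, hcbit, beq_iff_eq, Bool.not_eq_true', beq_eq_false_iff_ne] at h1 h2
      rw [heq] at h1
      exact h2 h1
    · intro hne
      have hne' : ((blk i : ℕ)) ≠ ((blk j : ℕ)) := fun h => hne (Fin.ext h)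
      obtain ⟨t, ht, htb⟩ := testbit_ne (lt_of_lt_of_le (blk i).2 hbpow)
        (lt_of_lt_of_le (blk j).2 hbpow) hne'
      refine ⟨⟨⟨t, ht⟩, if (blk i : ℕ).testBit t then 0 else 1⟩, ?_, ?_⟩
      · simp only [hrbit]
        cases hbi : (blk i : ℕ).testBit t <;> simp [hbi]
      · simp only [hcbit]
        cases hbi : (blk i : ℕ).testBit t <;> cases hbj : (blk j : ℕ).testBit t <;>
          simp_all
  -- rank-k' factorization of (U₀V₀) ∘ W
  set U' : Fin n → Fin k' → Bool :=
    fun i m => decide (∃ p : Fin k × (Fin L × Fin 2), e p = m ∧ U₀ i p.1 = true ∧ rbit i p.2 = true)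
    with hU'
  set V' : Fin k' → Fin n → Bool :=
    fun m j => decide (∃ p : Fin k × (Fin L × Fin 2), e p = m ∧ V₀ p.1 j = true ∧ cbit p.2 j = true)
    with hV'
  have hEq : ∀ i j, bMul U' V' i j = (bMul U₀ V₀ i j && W i j) := by
    intro i j
    have step : (∃ m, U' i m = true ∧ V' m j = true) ↔
        ((∃ l, U₀ i l = true ∧ V₀ l j = true) ∧ blk i ≠ blk j) := by
      constructor
      · rintro ⟨m, hu, hv⟩
        simp only [hU', hV', decide_eq_true_eq] at hu hv
        obtain ⟨p, hpe, hpu, hpr⟩ := hu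
        obtain ⟨q, hqe, hqv, hqc⟩ := hv
        have hpq : p = q := e.injective (by rw [hpe, hqe])
        subst hpq
        exact ⟨⟨p.1, hpu, hqv⟩, (hWfact i j).mp ⟨p.2, hpr, hqc⟩⟩
      · rintro ⟨⟨l, hl1, hl2⟩, hne⟩
        obtain ⟨q, hq1, hq2⟩ := (hWfact i j).mpr hne
        exact ⟨e (l, q), by simp only [hU', decide_eq_true_eq]; exact ⟨(l, q), rfl, hl1, hq1⟩,
          by simp only [hV', decide_eq_true_eq]; exact ⟨(l, q), rfl, hl2, hq2⟩⟩
    simp only [bMul]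
    rw [show W i j = decide (blk i ≠ blk j) by
      cases hw : W i j
      · refine (decide_eq_false ?_).symm
        intro hc
        rw [(hW i j).mpr hc] at hw; simp at hw
      · exact (decide_eq_true ((hW i j).mp hw)).symm]
    rw [← Bool.decide_and, decide_eq_decide]
    exact step
  -- l0diff of the masked product equals the masked l0maskdiff
  have hval : l0diff (bHad A W) (bMul U' V') = l0maskdiff W A (bMul U₀ V₀) := by
    unfold l0diff l0maskdiff
    congr 1
    apply Finset.filter_congr
    intro p _
    simp only [bHad, hEq p.1 p.2]
    cases hw : W p.1 p.2 <;> simp [hw]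
  -- sInf S' ≤ sInf S
  have h1 : sInf S' ≤ sInf S := by
    rw [hU₀V₀]
    calc sInf S' ≤ l0diff (bHad A W) (bMul U' V') := Nat.sInf_le ⟨U', V', rfl⟩
    _ = l0maskdiff W A (bMul U₀ V₀) := hval
  -- masked diff bounded by full diff
  have h2 : l0maskdiff W A (bMul U V) ≤ l0diff (bHad A W) (bMul U V) := by
    apply Finset.card_le_card
    intro p hp
    simp only [Finset.mem_filter, Finset.mem_univ, true_and] at hp ⊢
    obtain ⟨hw, hne⟩ := hp
    simpa [bHad, hw] using hne
  calc l0maskdiff W A (bMul U V) ≤ l0diff (bHad A W) (bMul U V) := h2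
  _ ≤ sInf S' + Δ := hUV
  _ ≤ sInf S + Δ := Nat.add_le_add_right h1 Δ
  _ ≤ 8 * L * sInf S + Δ := Nat.add_le_add_right
      (Nat.le_mul_of_pos_left _ (by positivity)) Δ
end

section
/- Coloring from exact binary masked factorization: Let G = (V, E) be an undirected graph on vertex set [n], and let U, V ∈ {0,1}^{n×k'} be binary matrices with rows u_1,…,u_n and v_1,…,v_n respectively. Suppose that for every i ∈ [n] the inner product u_iᵀv_i = 1, and for every edge {i,j} ∈ E both u_iᵀv_j = 0 and u_jᵀv_i = 0. Then G admits a proper coloring with at most k' colors, i.e., there is a function c : [n] → [k'] such that c(i) ≠ c(j) for every edge {i,j} ∈ E. -/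
open BigOperators

/-- coloring from an exact binary masked factorization. -/
theorem stmt14
    {n k' : ℕ} (G : SimpleGraph (Fin n))
    (U V : Matrix (Fin n) (Fin k') ℝ)
    (hUbin : ∀ i l, U i l = 0 ∨ U i l = 1)
    (hVbin : ∀ i l, V i l = 0 ∨ V i l = 1)
    (hdiag : ∀ i, ∑ l, U i l * V i l = 1)
    (hedge : ∀ i j, G.Adj i j → (∑ l, U i l * V j l = 0 ∧ ∑ l, U j l * V i l = 0)) :
    ∃ c : Fin n → Fin k', ∀ i j, G.Adj i j → c i ≠ c j := by
  have hpick : ∀ i : Fin n, ∃ l : Fin k', U i l = 1 ∧ V i l = 1 := by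
    intro i
    by_contra h
    push_neg at h
    have : ∑ l, U i l * V i l = 0 := by
      apply Finset.sum_eq_zero
      intro l _
      rcases hUbin i l with hu | hu
      · simp [hu]
      · rcases hVbin i l with hv | hv
        · simp [hv]
        · exact absurd hv (h l hu)
    have := hdiag i
    simp_all
  choose c hc using hpick
  refine ⟨c, fun i j hadj hcij => ?_⟩
  have hsum := (hedge i j hadj).1
  have hnonneg : ∀ l ∈ Finset.univ, (0:ℝ) ≤ U i l * V j l := by
    intro l _
    rcases hUbin i l with hu | hu <;> rcases hVbin j l with hv | hv <;> simp [hu, hv]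
  have := (Finset.sum_eq_zero_iff_of_nonneg hnonneg).mp hsum (c i) (Finset.mem_univ _)
  rw [(hc i).1, hcij, (hc j).2] at this
  norm_num at this
end

section
/- Coloring from exact non-negative masked factorization: Let G = (V, E) be an undirected graph on vertex set [n], and let U, V ∈ ℝ^{n×k'} be matrices with all entries non-negative, with rows u_1,…,u_n and v_1,…,v_n respectively. Suppose that for every i ∈ [n] the inner product u_iᵀv_i = 1, and for every edge {i,j} ∈ E both u_iᵀv_j = 0 and u_jᵀv_i = 0. Then G admits a proper coloring with at most k' colors, i.e., there is a function c : [n] → [k'] such that c(i) ≠ c(j) for every edge {i,j} ∈ E. -/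
open BigOperators

/-- coloring from an exact non-negative masked factorization. -/
theorem stmt15
    {n k' : ℕ} (G : SimpleGraph (Fin n))
    (U V : Matrix (Fin n) (Fin k') ℝ)
    (hUnonneg : ∀ i l, 0 ≤ U i l)
    (hVnonneg : ∀ i l, 0 ≤ V i l)
    (hdiag : ∀ i, ∑ l, U i l * V i l = 1)
    (hedge : ∀ i j, G.Adj i j → (∑ l, U i l * V j l = 0 ∧ ∑ l, U j l * V i l = 0)) :
    ∃ c : Fin n → Fin k', ∀ i j, G.Adj i j → c i ≠ c j := by
  have hpos : ∀ i : Fin n, ∃ l : Fin k', 0 < U i l * V i l := by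
    intro i
    by_contra h
    push_neg at h
    have : ∑ l, U i l * V i l = 0 :=
      le_antisymm (Finset.sum_nonpos (fun l _ => h l))
        (Finset.sum_nonneg (fun l _ => mul_nonneg (hUnonneg i l) (hVnonneg i l)))
    rw [hdiag i] at this
    norm_num at this
  choose c hc using hpos
  refine ⟨c, fun i j hadj hcij => ?_⟩
  have h0 := (hedge i j hadj).1
  have hterm : U i (c i) * V j (c i) = 0 := by
    have := (Finset.sum_eq_zero_iff_of_nonneg
      (fun l _ => mul_nonneg (hUnonneg i l) (hVnonneg j l))).mp h0 (c i) (Finset.mem_univ _)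
    exact this
  have hUi : 0 < U i (c i) := by
    by_contra h
    push_neg at h
    have := hc i
    nlinarith [hVnonneg i (c i)]
  have hVj : 0 < V j (c j) := by
    by_contra h
    push_neg at h
    have := hc j
    nlinarith [hUnonneg j (c j)]
  rw [hcij] at hterm hUi
  nlinarith
end

section
/- Main structural result for low-rank matrices and sparse masks: Let W ∈ {0,1}^{n×p} have at most t zero entries in each column, let L ∈ ℝ^{n×p} have rank at most k, and let 0 < ε < 1. Then there exists a subset of row indices S ⊆ [n] with |S| ≤ tk/ε such that, letting Ľ and W̌ denote the submatrices of L and W obtained by deleting the rows indexed by S, it holds that ‖Ľ ∘ (1 − W̌)‖_F² ≤ (ε/(1−ε)) · ‖L ∘ W‖_F². -/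
open Matrix BigOperators Finset
open scoped RealInnerProductSpace

set_option maxHeartbeats 1000000

lemma eucl_norm_sq {n : ℕ} (x : EuclideanSpace ℝ (Fin n)) : ‖x‖ ^ 2 = ∑ i, x i ^ 2 := by
  rw [EuclideanSpace.norm_eq, Real.sq_sqrt (by positivity)]
  simp [sq_abs]

lemma eucl_inner_eq {n : ℕ} (x y : EuclideanSpace ℝ (Fin n)) : ⟪x, y⟫ = ∑ i, x i * y i := by
  simp [PiLp.inner_apply, RCLike.inner_apply, conj_trivial]
  exact Finset.sum_congr rfl fun i _ => mul_comm _ _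

lemma master_ineq {n p : ℕ} (k t : ℕ) (A N : Fin n → Fin p → ℝ) (lam : ℝ) (hlam : 0 ≤ lam)
    (hAN : ∀ i j, A i j * N i j = 0)
    (hsupp : ∀ j, (Finset.univ.filter fun i => A i j ≠ 0).card ≤ t)
    (hrow : ∀ i, ∑ j, A i j ^ 2 ≤ lam)
    (V : Submodule ℝ (EuclideanSpace ℝ (Fin n)))
    (hV : Module.finrank ℝ V ≤ k)
    (hcol : ∀ j, (WithLp.toLp 2 (fun i => A i j + N i j) : EuclideanSpace ℝ (Fin n)) ∈ V) :
    (∑ j, ∑ i, A i j ^ 2) ^ 2 ≤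
      (k : ℝ) * t * lam * ((∑ j, ∑ i, A i j ^ 2) + ∑ j, ∑ i, N i j ^ 2) := by
  classical
  set E := EuclideanSpace ℝ (Fin n)
  let a : Fin p → E := fun j => (WithLp.toLp 2 (fun i => A i j) : EuclideanSpace ℝ (Fin n))
  let w : Fin p → E := fun j => (WithLp.toLp 2 (fun i => N i j) : EuclideanSpace ℝ (Fin n))
  have haw : ∀ j, a j + w j ∈ V := fun j => hcol j
  let P := V.orthogonalProjectionOnto
  have hVmem : ∀ (v : E), v ∈ V → ∀ x : E, ⟪v, x - P x⟫ = 0 := fun v hv x =>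
    Submodule.inner_right_of_mem_orthogonal hv (Submodule.sub_starProjection_mem_orthogonal x)
  -- Pythagoras
  have pyth : ∀ x : E, ‖x‖ ^ 2 = ‖(P x : E)‖ ^ 2 + ‖x - P x‖ ^ 2 := by
    intro x
    have hx : x = (P x : E) + (x - P x) := by abel
    calc ‖x‖ ^ 2 = ‖(P x : E) + (x - (P x : E))‖ ^ 2 := by rw [← hx]
    _ = ‖(P x : E)‖ ^ 2 + 2 * ⟪(P x : E), x - P x⟫ + ‖x - (P x : E)‖ ^ 2 := norm_add_sq_real _ _
    _ = ‖(P x : E)‖ ^ 2 + ‖x - (P x : E)‖ ^ 2 := by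
        rw [hVmem _ (P x).2 x]; ring
  -- orthonormal basis of V
  let d := Module.finrank ℝ V
  let bo : OrthonormalBasis (Fin d) ℝ V := stdOrthonormalBasis ℝ V
  let u : Fin d → E := fun l => ((bo l : V) : E)
  have hu_norm : ∀ l, ∑ i, (u l i) ^ 2 = 1 := by
    intro l
    rw [← eucl_norm_sq]
    have h1 : ‖u l‖ = ‖bo l‖ := rfl
    rw [h1, bo.orthonormal.1 l, one_pow]
  -- Parseval for projections
  have parseval : ∀ x : E, ‖(P x : E)‖ ^ 2 = ∑ l, ⟪u l, x⟫ ^ 2 := by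
    intro x
    have h2 : ‖(P x : E)‖ = ‖bo.repr (P x)‖ := by rw [bo.repr.norm_map (P x)]; rfl
    rw [h2, eucl_norm_sq]
    refine Finset.sum_congr rfl fun l _ => ?_
    have h3 : bo.repr (P x) l = ⟪bo l, P x⟫ := bo.repr_apply_apply (P x) l
    have h4 : ⟪bo l, P x⟫ = ⟪u l, (P x : E)⟫ := rfl
    have h5 : ⟪u l, (P x : E)⟫ = ⟪u l, x⟫ := by
      have h6 := hVmem (u l) (bo l).2 x
      rw [inner_sub_right] at h6
      linarith
    rw [h3, h4, h5]
  -- spectral bound via column sparsity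
  have hspec : ∀ l, ∑ j, ⟪u l, a j⟫ ^ 2 ≤ (t : ℝ) * lam := by
    intro l
    have hstep : ∀ j, ⟪u l, a j⟫ ^ 2 ≤ (t : ℝ) * ∑ i, (u l i * A i j) ^ 2 := by
      intro j
      have h1 : ⟪u l, a j⟫ = ∑ i, u l i * A i j := eucl_inner_eq _ _
      set Z := Finset.univ.filter (fun i => A i j ≠ 0) with hZdef
      have h2 : ∑ i, u l i * A i j = ∑ i ∈ Z, u l i * A i j := by
        refine (Finset.sum_subset (Finset.subset_univ Z) fun i _ hi => ?_).symm
        have : A i j = 0 := by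
          by_contra hne
          exact hi (Finset.mem_filter.mpr ⟨Finset.mem_univ i, hne⟩)
        rw [this, mul_zero]
      have h3 : (∑ i ∈ Z, u l i * A i j) ^ 2 ≤
          (Z.card : ℝ) * ∑ i ∈ Z, (u l i * A i j) ^ 2 := by
        have := Finset.sum_mul_sq_le_sq_mul_sq Z (fun _ => (1 : ℝ)) (fun i => u l i * A i j)
        simpa using this
      have h4 : (Z.card : ℝ) ≤ (t : ℝ) := by exact_mod_cast hsupp j
      have h5 : ∑ i ∈ Z, (u l i * A i j) ^ 2 ≤ ∑ i, (u l i * A i j) ^ 2 :=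
        Finset.sum_le_sum_of_subset_of_nonneg (Finset.subset_univ Z)
          (fun i _ _ => sq_nonneg _)
      have h6 : (0 : ℝ) ≤ ∑ i ∈ Z, (u l i * A i j) ^ 2 :=
        Finset.sum_nonneg fun i _ => sq_nonneg _
      calc ⟪u l, a j⟫ ^ 2 = (∑ i ∈ Z, u l i * A i j) ^ 2 := by rw [h1, h2]
      _ ≤ (Z.card : ℝ) * ∑ i ∈ Z, (u l i * A i j) ^ 2 := h3
      _ ≤ (t : ℝ) * ∑ i, (u l i * A i j) ^ 2 := by
          exact mul_le_mul h4 h5 h6 (by positivity)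
    calc ∑ j, ⟪u l, a j⟫ ^ 2 ≤ ∑ j, (t : ℝ) * ∑ i, (u l i * A i j) ^ 2 :=
        Finset.sum_le_sum fun j _ => hstep j
    _ = (t : ℝ) * ∑ i, (u l i) ^ 2 * ∑ j, A i j ^ 2 := by
        rw [← Finset.mul_sum, Finset.sum_comm]
        congr 1
        refine Finset.sum_congr rfl fun i _ => ?_
        rw [Finset.mul_sum]
        refine Finset.sum_congr rfl fun j _ => by ring
    _ ≤ (t : ℝ) * ∑ i, (u l i) ^ 2 * lam := by
        refine mul_le_mul_of_nonneg_left (Finset.sum_le_sum fun i _ => ?_) (by positivity)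
        exact mul_le_mul_of_nonneg_left (hrow i) (sq_nonneg _)
    _ = (t : ℝ) * lam := by rw [← Finset.sum_mul, hu_norm l, one_mul]
  -- total projected mass bound
  set Ψ := ∑ j, ∑ i, A i j ^ 2 with hΨdef
  set b := ∑ j, ∑ i, N i j ^ 2 with hbdef
  set G := ∑ j, ‖(P (w j) : E)‖ ^ 2 with hGdef
  have hΨa : Ψ = ∑ j, ‖a j‖ ^ 2 := Finset.sum_congr rfl fun j _ => (eucl_norm_sq (a j)).symm
  have hbw : b = ∑ j, ‖w j‖ ^ 2 := Finset.sum_congr rfl fun j _ => (eucl_norm_sq (w j)).symm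
  have hPa_tot : ∑ j, ‖(P (a j) : E)‖ ^ 2 ≤ (k : ℝ) * t * lam := by
    have hd : (d : ℝ) ≤ (k : ℝ) := by exact_mod_cast hV
    calc ∑ j, ‖(P (a j) : E)‖ ^ 2 = ∑ j, ∑ l, ⟪u l, a j⟫ ^ 2 :=
        Finset.sum_congr rfl fun j _ => parseval _
    _ = ∑ l, ∑ j, ⟪u l, a j⟫ ^ 2 := Finset.sum_comm
    _ ≤ ∑ _l : Fin d, (t : ℝ) * lam := Finset.sum_le_sum fun l _ => hspec l
    _ = (d : ℝ) * ((t : ℝ) * lam) := by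
        rw [Finset.sum_const, Finset.card_univ, Fintype.card_fin, nsmul_eq_mul]
    _ ≤ (k : ℝ) * t * lam := by
        have h1 : (0:ℝ) ≤ (t : ℝ) * lam := by positivity
        nlinarith
  -- per column decomposition
  have hdecomp : ∀ j, ‖a j‖ ^ 2 = ‖(P (a j) : E)‖ ^ 2 + ‖w j‖ ^ 2 - ‖(P (w j) : E)‖ ^ 2 := by
    intro j
    have hcc : (P (a j + w j) : E) = a j + w j := Submodule.starProjection_eq_self_iff.mpr (haw j)
    have hma : (P (a j + w j) : E) = (P (a j) : E) + (P (w j) : E) := by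
      rw [map_add]; rfl
    have h1 : a j - (P (a j) : E) = -(w j - (P (w j) : E)) := by
      have h0 : a j + w j = (P (a j) : E) + (P (w j) : E) := hcc.symm.trans hma
      have := h0
      rw [← sub_eq_zero] at this ⊢
      rw [← this]
      abel
    have h2 : ‖a j - (P (a j) : E)‖ = ‖w j - (P (w j) : E)‖ := by rw [h1, norm_neg]
    have p1 := pyth (a j)
    have p2 := pyth (w j)
    rw [show (a j - P (a j) : E) = a j - (P (a j) : E) from rfl] at p1
    rw [h2] at p1
    linarith
  have hsum_decomp : Ψ = (∑ j, ‖(P (a j) : E)‖ ^ 2) + b - G := by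
    rw [hΨa, hbw, hGdef]
    rw [Finset.sum_congr rfl fun j _ => hdecomp j]
    rw [← Finset.sum_add_distrib, ← Finset.sum_sub_distrib]
  have hΨle : Ψ ≤ (k : ℝ) * t * lam + b - G := by linarith [hPa_tot]
  -- alignment bound
  have hinner_aw : ∀ j, ⟪a j, w j⟫ = 0 := by
    intro j
    rw [eucl_inner_eq]
    exact Finset.sum_eq_zero fun i _ => hAN i j
  have hcb : ∀ j, ‖a j + w j‖ ^ 2 = ‖a j‖ ^ 2 + ‖w j‖ ^ 2 := by
    intro j
    rw [norm_add_sq_real, hinner_aw j]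
    ring
  have hbPw : ∀ j, ‖w j‖ ^ 2 ≤ ‖a j + w j‖ * ‖(P (w j) : E)‖ := by
    intro j
    have h0 : ⟪a j + w j, w j - P (w j)⟫ = 0 := hVmem _ (haw j) (w j)
    rw [inner_sub_right] at h0
    have h1 : ⟪a j + w j, w j⟫ = ⟪a j + w j, (P (w j) : E)⟫ := by linarith
    have h2 : ⟪a j + w j, w j⟫ = ‖w j‖ ^ 2 := by
      rw [inner_add_left, hinner_aw j, real_inner_self_eq_norm_sq]
      ring
    rw [← h2, h1]
    exact real_inner_le_norm _ _
  have hb_le : b ≤ ∑ j, ‖a j + w j‖ * ‖(P (w j) : E)‖ := by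
    rw [hbw]
    exact Finset.sum_le_sum fun j _ => hbPw j
  have hCS2 : (∑ j, ‖a j + w j‖ * ‖(P (w j) : E)‖) ^ 2 ≤ (∑ j, ‖a j + w j‖ ^ 2) * G :=
    Finset.sum_mul_sq_le_sq_mul_sq Finset.univ _ _
  have hsumc : ∑ j, ‖a j + w j‖ ^ 2 = Ψ + b := by
    rw [Finset.sum_congr rfl fun j _ => hcb j, Finset.sum_add_distrib, ← hΨa, ← hbw]
  have hb0 : (0 : ℝ) ≤ b := by
    rw [hbw]; exact Finset.sum_nonneg fun j _ => sq_nonneg _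
  have hΨ0 : (0 : ℝ) ≤ Ψ := by
    rw [hΨa]; exact Finset.sum_nonneg fun j _ => sq_nonneg _
  have hG0 : (0 : ℝ) ≤ G := by
    rw [hGdef]; exact Finset.sum_nonneg fun j _ => sq_nonneg _
  have hbG : b ^ 2 ≤ (Ψ + b) * G := by
    calc b ^ 2 ≤ (∑ j, ‖a j + w j‖ * ‖(P (w j) : E)‖) ^ 2 := by
          exact pow_le_pow_left₀ hb0 hb_le 2
    _ ≤ (∑ j, ‖a j + w j‖ ^ 2) * G := hCS2
    _ = (Ψ + b) * G := by rw [hsumc]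
  -- final algebra
  nlinarith [mul_nonneg (add_nonneg hΨ0 hb0)
      (by linarith : (0 : ℝ) ≤ (k : ℝ) * t * lam + b - G - Ψ), hbG]

/-- Capped master inequality in terms of the original data. -/
lemma capped_master {n p : ℕ} (k t : ℕ) (L W : Matrix (Fin n) (Fin p) ℝ)
    (hWbin : ∀ i j, W i j = 0 ∨ W i j = 1)
    (hWcol : ∀ j, (Finset.univ.filter fun i => W i j = 0).card ≤ t)
    (hL_rank : L.rank ≤ k)
    (lam : ℝ) (hlam : 0 ≤ lam) :
    (∑ i, min (∑ j, (L i j * (1 - W i j)) ^ 2) lam) ^ 2 ≤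
      (k : ℝ) * t * lam *
        ((∑ i, min (∑ j, (L i j * (1 - W i j)) ^ 2) lam) + ∑ i, ∑ j, (L i j * W i j) ^ 2) := by
  classical
  set ρ : Fin n → ℝ := fun i => ∑ j, (L i j * (1 - W i j)) ^ 2 with hρdef
  have hρ0 : ∀ i, 0 ≤ ρ i := fun i => Finset.sum_nonneg fun j _ => sq_nonneg _
  set θ : Fin n → ℝ := fun i => if ρ i ≤ lam then 1 else Real.sqrt (lam / ρ i) with hθdef
  have hθ0 : ∀ i, 0 ≤ θ i := by
    intro i
    by_cases h : ρ i ≤ lam <;> simp only [hθdef, h, if_true, if_false]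
    · exact zero_le_one
    · exact Real.sqrt_nonneg _
  have hθ1 : ∀ i, θ i ≤ 1 := by
    intro i
    by_cases h : ρ i ≤ lam <;> simp only [hθdef, h, if_true, if_false]
    · exact le_refl 1
    · push_neg at h
      have hρpos : 0 < ρ i := lt_of_le_of_lt hlam h
      rw [show (1:ℝ) = Real.sqrt 1 from (Real.sqrt_one).symm]
      apply Real.sqrt_le_sqrt
      rw [div_le_one hρpos]
      linarith
  have hθsq : ∀ i, θ i ^ 2 * ρ i = min (ρ i) lam := by
    intro i
    by_cases h : ρ i ≤ lam
    · simp only [hθdef, h, if_true, one_pow, one_mul, min_eq_left h]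
    · push_neg at h
      have hρpos : 0 < ρ i := lt_of_le_of_lt hlam h
      simp only [hθdef, h, not_le.mpr h, if_false]
      rw [Real.sq_sqrt (by positivity), div_mul_cancel₀ _ (ne_of_gt hρpos),
        min_eq_right h.le]
  set A : Fin n → Fin p → ℝ := fun i j => θ i * (L i j * (1 - W i j)) with hAdef
  set Nm : Fin n → Fin p → ℝ := fun i j => θ i * (L i j * W i j) with hNdef
  have hrowA : ∀ i, ∑ j, A i j ^ 2 = min (ρ i) lam := by
    intro i
    rw [← hθsq i, hρdef]
    simp only [hAdef]
    rw [Finset.mul_sum]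
    exact Finset.sum_congr rfl fun j _ => by ring
  -- the subspace
  let F : (Fin n → ℝ) →ₗ[ℝ] EuclideanSpace ℝ (Fin n) :=
    { toFun := fun v => (WithLp.toLp 2 (fun i => θ i * v i) : EuclideanSpace ℝ (Fin n))
      map_add' := fun x y => by ext i; simp [mul_add]
      map_smul' := fun c x => by ext i; simp [smul_eq_mul]; ring }
  set V : Submodule ℝ (EuclideanSpace ℝ (Fin n)) :=
    Submodule.span ℝ (Set.range fun j => F (Lᵀ j)) with hVdef
  have hVrank : Module.finrank ℝ V ≤ k := by
    have h1 : (Set.range fun j => F (Lᵀ j)) = F '' Set.range Lᵀ := by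
      exact Set.range_comp _ _
    rw [hVdef, h1, Submodule.span_image]
    refine le_trans (Submodule.finrank_map_le F _) ?_
    rw [show Set.range Lᵀ = Set.range L.col from rfl, ← Matrix.rank_eq_finrank_span_cols]
    exact hL_rank
  have key := master_ineq k t A Nm lam hlam
    (by
      intro i j
      rcases hWbin i j with h | h <;> simp only [hAdef, hNdef, h] <;> ring)
    (by
      intro j
      refine le_trans (Finset.card_le_card ?_) (hWcol j)
      intro i hi
      simp only [Finset.mem_filter, Finset.mem_univ, true_and] at hi ⊢
      rcases hWbin i j with h | h
      · exact h
      · exfalso; apply hi; simp only [hAdef, h]; ring)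
    (fun i => by rw [hrowA i]; exact min_le_right _ _)
    V hVrank
    (by
      intro j
      have hfun : (WithLp.toLp 2 (fun i => A i j + Nm i j) : EuclideanSpace ℝ (Fin n)) = F (Lᵀ j) := by
        ext i
        show A i j + Nm i j = θ i * (Lᵀ j i)
        simp only [hAdef, hNdef, Matrix.transpose_apply]
        ring
      rw [hfun]
      exact Submodule.subset_span (Set.mem_range_self j))
  have hA_tot : ∑ j, ∑ i, A i j ^ 2 = ∑ i, min (ρ i) lam := by
    rw [Finset.sum_comm]
    exact Finset.sum_congr rfl fun i _ => hrowA i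
  have hN_tot : ∑ j, ∑ i, Nm i j ^ 2 ≤ ∑ i, ∑ j, (L i j * W i j) ^ 2 := by
    rw [Finset.sum_comm]
    refine Finset.sum_le_sum fun i _ => Finset.sum_le_sum fun j _ => ?_
    simp only [hNdef, mul_pow]
    have h1 : θ i ^ 2 ≤ 1 := by
      have := hθ0 i; have := hθ1 i; nlinarith
    nlinarith [sq_nonneg (L i j * W i j)]
  rw [hA_tot] at key
  calc (∑ i, min (ρ i) lam) ^ 2 ≤
      (k : ℝ) * t * lam * ((∑ i, min (ρ i) lam) + ∑ j, ∑ i, Nm i j ^ 2) := key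
  _ ≤ (k : ℝ) * t * lam * ((∑ i, min (ρ i) lam) + ∑ i, ∑ j, (L i j * W i j) ^ 2) := by
      refine mul_le_mul_of_nonneg_left (by linarith [hN_tot]) (by positivity)

-- helper: top-s selection
lemma exists_top_subset {n : ℕ} (ρ : Fin n → ℝ) (s : ℕ) (hs : s ≤ n) :
    ∃ S : Finset (Fin n), S.card = s ∧ ∀ j ∉ S, ∀ i ∈ S, ρ j ≤ ρ i := by
  induction s with
  | zero => exact ⟨∅, by simp, by simp⟩
  | succ m ih =>
      obtain ⟨S, hScard, hStop⟩ := ih (Nat.le_of_succ_le hs)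
      have hne : (Sᶜ : Finset (Fin n)).Nonempty := by
        rw [← Finset.card_pos, Finset.card_compl, hScard, Fintype.card_fin]
        omega
      obtain ⟨i₀, hi₀mem, hi₀max⟩ := Finset.exists_max_image Sᶜ ρ hne
      have hi₀ : i₀ ∉ S := by simpa using hi₀mem
      refine ⟨insert i₀ S, by rw [Finset.card_insert_of_notMem hi₀, hScard], ?_⟩
      intro j hj i hi
      have hjS : j ∉ S := fun h => hj (Finset.mem_insert_of_mem h)
      rcases Finset.mem_insert.mp hi with rfl | hiS
      · exact hi₀max j (by simpa using hjS)
      · exact hStop j hjS i hiS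

/-- main structural result for low-rank matrices and sparse masks.
If `W ∈ {0,1}^{n×p}` has at most `t` zeros per column and `L` has rank at most `k`, then
deleting at most `tk/ε` rows, the mass of `L` outside the support of `W` is at most an
`ε/(1−ε)` fraction of its mass on the support of `W`. -/
theorem stmt16
    {n p t k : ℕ}
    (W : Matrix (Fin n) (Fin p) ℝ)
    (hWbin : ∀ i j, W i j = 0 ∨ W i j = 1)
    (hWcol : ∀ j, (Finset.univ.filter fun i => W i j = 0).card ≤ t)
    (L : Matrix (Fin n) (Fin p) ℝ) (hL_rank : L.rank ≤ k)
    (ε : ℝ) (hε : 0 < ε) (hε1 : ε < 1) :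
    ∃ S : Finset (Fin n), (S.card : ℝ) ≤ (t : ℝ) * (k : ℝ) / ε ∧
      ∑ i ∈ Finset.univ \ S, ∑ j, (L i j * (1 - W i j)) ^ 2 ≤
        ε / (1 - ε) * ∑ i, ∑ j, (L i j * W i j) ^ 2 := by
  classical
  have hε1' : (0 : ℝ) < 1 - ε := by linarith
  have hB0 : (0 : ℝ) ≤ ∑ i, ∑ j, (L i j * W i j) ^ 2 :=
    Finset.sum_nonneg fun i _ => Finset.sum_nonneg fun j _ => sq_nonneg _
  have hfac : (0 : ℝ) ≤ ε / (1 - ε) := by positivity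
  have hRHS0 : (0 : ℝ) ≤ ε / (1 - ε) * ∑ i, ∑ j, (L i j * W i j) ^ 2 :=
    mul_nonneg hfac hB0
  -- trivial case : t = 0
  by_cases ht0 : t = 0
  · refine ⟨∅, by simp [ht0], ?_⟩
    have hW1 : ∀ i j, W i j = 1 := by
      intro i j
      rcases hWbin i j with h | h
      · exfalso
        have h1 : 0 < (Finset.univ.filter fun i => W i j = 0).card :=
          Finset.card_pos.mpr ⟨i, Finset.mem_filter.mpr ⟨Finset.mem_univ i, h⟩⟩
        have h2 := hWcol j
        omega
      · exact h
    have : ∀ i ∈ Finset.univ \ (∅ : Finset (Fin n)),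
        ∑ j, (L i j * (1 - W i j)) ^ 2 = 0 := by
      intro i _
      refine Finset.sum_eq_zero fun j _ => ?_
      rw [hW1 i j]
      ring
    rw [Finset.sum_congr rfl this, Finset.sum_const, smul_zero]
    exact hRHS0
  -- trivial case : k = 0
  by_cases hk0 : k = 0
  · refine ⟨∅, by simp [hk0], ?_⟩
    have hL0 : ∀ i j, L i j = 0 := by
      have h0 : L.rank = 0 := by omega
      rw [Matrix.rank_eq_finrank_span_cols] at h0
      have h1 : Submodule.span ℝ (Set.range Lᵀ) = ⊥ := Submodule.finrank_eq_zero.mp h0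
      intro i j
      have h2 : Lᵀ j ∈ Submodule.span ℝ (Set.range Lᵀ) := Submodule.subset_span ⟨j, rfl⟩
      rw [h1, Submodule.mem_bot] at h2
      have h3 := congrFun h2 i
      simpa using h3
    have hzero : ∀ i ∈ Finset.univ \ (∅ : Finset (Fin n)),
        ∑ j, (L i j * (1 - W i j)) ^ 2 = 0 := fun i _ =>
      Finset.sum_eq_zero fun j _ => by rw [hL0 i j]; ring
    rw [Finset.sum_congr rfl hzero, Finset.sum_const, smul_zero]
    exact hRHS0
  -- main case
  set ρ : Fin n → ℝ := fun i => ∑ j, (L i j * (1 - W i j)) ^ 2 with hρdef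
  have hρ0 : ∀ i, 0 ≤ ρ i := fun i => Finset.sum_nonneg fun j _ => sq_nonneg _
  set q : ℕ := k * t with hqdef
  have hq1 : 1 ≤ q := Nat.one_le_iff_ne_zero.mpr (mul_ne_zero hk0 ht0)
  set y : ℝ := (q : ℝ) / ε with hydef
  have hy0 : 0 ≤ y := by positivity
  have hy1 : 1 ≤ y := by
    rw [hydef, le_div_iff₀ hε]
    have : (1:ℝ) ≤ (q:ℝ) := by exact_mod_cast hq1
    nlinarith
  set s : ℕ := min n (Nat.floor y) with hsdef
  obtain ⟨S, hScard, hStop⟩ := exists_top_subset ρ s (min_le_left _ _)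
  have hcard : (S.card : ℝ) ≤ (t : ℝ) * (k : ℝ) / ε := by
    rw [hScard]
    have h1 : (s : ℝ) ≤ (Nat.floor y : ℝ) := by exact_mod_cast min_le_right n (Nat.floor y)
    have h2 : (Nat.floor y : ℝ) ≤ y := Nat.floor_le hy0
    have h3 : y = (t : ℝ) * (k : ℝ) / ε := by
      rw [hydef, hqdef]
      push_cast
      ring
    linarith
  refine ⟨S, hcard, ?_⟩
  by_cases hall : Finset.univ \ S = ∅
  · rw [hall, Finset.sum_empty]
    exact hRHS0
  have hne : (Finset.univ \ S).Nonempty := Finset.nonempty_iff_ne_empty.mpr hall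
  obtain ⟨i₀, hi₀, hmax⟩ := Finset.exists_max_image (Finset.univ \ S) ρ hne
  have hi₀S : i₀ ∉ S := (Finset.mem_sdiff.mp hi₀).2
  set lam : ℝ := ρ i₀ with hlamdef
  have hlam0 : 0 ≤ lam := hρ0 i₀
  -- s equals the floor
  have hslt : s < n := by
    rcases Nat.lt_or_ge s n with h | h
    · exact h
    · exfalso
      have hsn : s = n := le_antisymm (min_le_left _ _) h
      have : S = Finset.univ := by
        apply Finset.eq_univ_of_card
        rw [hScard, hsn, Fintype.card_fin]
      rw [this] at hall
      simp at hall
  have hsfloor : s = Nat.floor y := by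
    rcases Nat.lt_or_ge (Nat.floor y) n with h | h
    · exact min_eq_right (le_of_lt h)
    · exfalso
      have : s = n := min_eq_left h
      omega
  have hsq : q ≤ s := by
    rw [hsfloor]
    apply Nat.le_floor
    rw [hydef, le_div_iff₀ hε]
    have : (0:ℝ) ≤ (q:ℝ) := by positivity
    nlinarith
  have h2s : y ≤ 2 * (s : ℝ) := by
    have h1 : y < (Nat.floor y : ℝ) + 1 := Nat.lt_floor_add_one y
    have h2 : 1 ≤ Nat.floor y := Nat.le_floor (by exact_mod_cast hy1)
    have h3 : (1:ℝ) ≤ (Nat.floor y : ℝ) := by exact_mod_cast h2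
    have h4 : (s:ℝ) = (Nat.floor y : ℝ) := by exact_mod_cast hsfloor
    linarith
  -- the capped sum identity
  set X : ℝ := ∑ i ∈ Finset.univ \ S, ρ i with hXdef
  have hX0 : 0 ≤ X := Finset.sum_nonneg fun i _ => hρ0 i
  have hΨeq : ∑ i, min (ρ i) lam = (s : ℝ) * lam + X := by
    have hsplit : ∑ i ∈ Finset.univ \ S, min (ρ i) lam + ∑ i ∈ S, min (ρ i) lam
        = ∑ i, min (ρ i) lam := Finset.sum_sdiff (Finset.subset_univ S)
    have hS1 : ∑ i ∈ S, min (ρ i) lam = (s : ℝ) * lam := by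
      have : ∀ i ∈ S, min (ρ i) lam = lam := by
        intro i hi
        exact min_eq_right (hStop i₀ hi₀S i hi)
      rw [Finset.sum_congr rfl this, Finset.sum_const, hScard, nsmul_eq_mul]
    have hS2 : ∑ i ∈ Finset.univ \ S, min (ρ i) lam = X := by
      refine Finset.sum_congr rfl fun i hi => min_eq_left (hmax i hi)
    linarith
  have key := capped_master k t L W hWbin hWcol hL_rank lam hlam0
  rw [show (∑ i, min (∑ j, (L i j * (1 - W i j)) ^ 2) lam) = ∑ i, min (ρ i) lam from rfl,
    hΨeq] at key
  -- final algebra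
  set B : ℝ := ∑ i, ∑ j, (L i j * W i j) ^ 2 with hBdef
  show X ≤ ε / (1 - ε) * B
  by_contra hcon
  push_neg at hcon
  have hXpos : 0 < X := lt_of_le_of_lt hRHS0 hcon
  have hεB : ε * B < (1 - ε) * X := by
    rw [div_mul_eq_mul_div, div_lt_iff₀ hε1'] at hcon
    nlinarith
  have hq0 : (0:ℝ) < (q:ℝ) := by exact_mod_cast hq1
  have hsq' : (q:ℝ) ≤ (s:ℝ) := by exact_mod_cast hsq
  have h2sq : (q:ℝ) * (1 - ε) / ε ≤ 2 * (s:ℝ) - (q:ℝ) := by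
    have : (q:ℝ)/ε ≤ 2 * (s:ℝ) := h2s
    have hexp : (q:ℝ) * (1 - ε) / ε = (q:ℝ)/ε - (q:ℝ) := by
      field_simp
    linarith
  have hmid : (q:ℝ) * B < (2 * (s:ℝ) - (q:ℝ)) * X := by
    have h1 : (q:ℝ) * (1 - ε) / ε * X ≤ (2 * (s:ℝ) - (q:ℝ)) * X :=
      mul_le_mul_of_nonneg_right h2sq hX0
    have h2 : (q:ℝ) * B < (q:ℝ) * (1 - ε) / ε * X := by
      rw [div_mul_eq_mul_div, lt_div_iff₀ hε]
      nlinarith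
    linarith
  have hkt : (k : ℝ) * t = (q : ℝ) := by rw [hqdef]; push_cast; ring
  rw [hkt] at key
  have hexpand : ((s:ℝ) * lam + X) ^ 2 - (q:ℝ) * lam * ((s:ℝ) * lam + X + B)
      = (s:ℝ) * ((s:ℝ) - (q:ℝ)) * lam ^ 2
        + lam * ((2 * (s:ℝ) - (q:ℝ)) * X - (q:ℝ) * B) + X ^ 2 := by ring
  have t1 : 0 ≤ (s:ℝ) * ((s:ℝ) - (q:ℝ)) * lam ^ 2 :=
    mul_nonneg (mul_nonneg (Nat.cast_nonneg s) (sub_nonneg.mpr hsq')) (sq_nonneg lam)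
  have t2 : 0 ≤ lam * ((2 * (s:ℝ) - (q:ℝ)) * X - (q:ℝ) * B) :=
    mul_nonneg hlam0 (by linarith)
  have t3 : 0 < X ^ 2 := by positivity
  linarith [key, hexpand, t1, t2, t3]
end

section
/- Sparse difference of approximate low-rank-plus-diagonal solutions: Let A, L, L' ∈ ℝ^{n×n} with L and L' each of rank at most k. Define diagonal matrices D and D' by D(i,i) = A(i,i) − L(i,i) and D'(i,i) = A(i,i) − L'(i,i) for all i (so D minimizes ‖A − (D̂ + L)‖_F² over all diagonal D̂, and similarly D'). Suppose ‖A − (D + L)‖_F² = C and ‖A − (D' + L')‖_F² ≤ C + γ for some γ ≥ 0. Then for every ε ∈ (0,1) there exists a set S ⊆ [n] with |S| ≤ 10k/ε² such that ∑_{i ∉ S} (D(i,i) − D'(i,i))² ≤ ε²C + ε²γ. The same conclusion holds if instead D(i,i) = max(0, A(i,i) − L(i,i)) and D'(i,i) = max(0, A(i,i) − L'(i,i)) (the minimizers over non-negative diagonal matrices). -/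
open Matrix BigOperators

section Aux
open Module

noncomputable def offSum {n : ℕ} (M : Matrix (Fin n) (Fin n) ℝ) : ℝ :=
  ∑ i, ∑ j ∈ Finset.univ.erase i, (M i j) ^ 2

lemma norm_sq_eq {n : ℕ} (x : EuclideanSpace ℝ (Fin n)) : ‖x‖ ^ 2 = ∑ j, (x j) ^ 2 := by
  rw [EuclideanSpace.norm_eq, Real.sq_sqrt (by positivity)]
  simp [sq_abs]

lemma core {n : ℕ} (W : Submodule ℝ (EuclideanSpace ℝ (Fin n)))
    (v : Fin n → EuclideanSpace ℝ (Fin n)) (hv : ∀ i, v i ∈ W)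
    (δ : ℝ) (hδ : 0 < δ) (S : Finset (Fin n))
    (hS : ∀ i ∈ S, ‖v i‖ ^ 2 < (1 + δ) * (v i i) ^ 2) :
    (S.card : ℝ) ≤ (1 + δ) * (finrank ℝ W) := by
  set d := finrank ℝ W with hd
  let b : OrthonormalBasis (Fin d) ℝ W := stdOrthonormalBasis ℝ W
  let u : Fin d → (Fin n) → ℝ := fun m => (b m : EuclideanSpace ℝ (Fin n))
  let T : Fin n → ℝ := fun i => ∑ m, (u m i) ^ 2
  have hT0 : ∀ i, 0 ≤ T i := fun i => Finset.sum_nonneg fun m _ => sq_nonneg _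
  have hTd : ∑ i, T i = (d : ℝ) := by
    rw [Finset.sum_comm]
    have : ∀ m, ∑ i, (u m i) ^ 2 = 1 := by
      intro m
      have h1 : ‖(b m : EuclideanSpace ℝ (Fin n))‖ = 1 := by
        have := b.orthonormal.1 m
        rwa [Submodule.norm_coe]
      have := norm_sq_eq (b m : EuclideanSpace ℝ (Fin n))
      rw [h1] at this
      simpa using this.symm
    simp [this, T, u]
  have key : ∀ i ∈ S, 1 ≤ (1 + δ) * T i := by
    intro i hi
    set w : W := ⟨v i, hv i⟩ with hw
    have hrepr : (∑ m, b.repr w m • (b m : EuclideanSpace ℝ (Fin n))) = v i := by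
      have := b.sum_repr w
      calc (∑ m, b.repr w m • (b m : EuclideanSpace ℝ (Fin n)))
          = ((∑ m, b.repr w m • b m : W) : EuclideanSpace ℝ (Fin n)) := by
            push_cast [Submodule.coe_sum]; rfl
        _ = v i := by rw [this]
    have hcoord : v i i = ∑ m, b.repr w m * u m i := by
      rw [← hrepr]
      show (∑ m, b.repr w m • (b m : EuclideanSpace ℝ (Fin n))) i = _
      rw [WithLp.ofLp_sum, Finset.sum_apply]
      rfl
    have hCS : (v i i) ^ 2 ≤ (∑ m, (b.repr w m) ^ 2) * T i := by
      rw [hcoord]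
      exact Finset.sum_mul_sq_le_sq_mul_sq _ _ _
    have hreprnorm : ∑ m, (b.repr w m) ^ 2 = ‖v i‖ ^ 2 := by
      have h1 : ‖b.repr w‖ = ‖w‖ := b.repr.norm_map w
      have h2 : ‖w‖ = ‖v i‖ := rfl
      have := norm_sq_eq (b.repr w)
      rw [h1, h2] at this
      exact this.symm
    rw [hreprnorm] at hCS
    have hlt := hS i hi
    have hvnn : (v i i) ^ 2 ≤ ‖v i‖ ^ 2 := by
      rw [norm_sq_eq]
      exact Finset.single_le_sum (f := fun j => (v i j) ^ 2) (fun j _ => sq_nonneg _)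
        (Finset.mem_univ i)
    have hpos : 0 < (v i i) ^ 2 := by nlinarith [sq_nonneg (v i i), norm_nonneg (v i)]
    nlinarith [hT0 i]
  calc (S.card : ℝ) = ∑ _i ∈ S, (1 : ℝ) := by simp
    _ ≤ ∑ i ∈ S, (1 + δ) * T i := Finset.sum_le_sum key
    _ ≤ ∑ i, (1 + δ) * T i := Finset.sum_le_sum_of_subset_of_nonneg (Finset.subset_univ S)
        (fun i _ _ => by positivity)
    _ = (1 + δ) * (d : ℝ) := by rw [← Finset.mul_sum, hTd]

/-- Off-diagonal mass is a lower bound for the residual with any diagonal correction. -/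
lemma offSum_le_frob2 {n : ℕ} (A L : Matrix (Fin n) (Fin n) ℝ) (d : Fin n → ℝ) :
    offSum (A - L) ≤ frob2 (A - (Matrix.diagonal d + L)) := by
  unfold offSum frob2
  apply Finset.sum_le_sum
  intro i _
  rw [← Finset.add_sum_erase _ _ (Finset.mem_univ i)]
  have hterm : ∀ j ∈ Finset.univ.erase i,
      ((A - L) i j) ^ 2 = ((A - (Matrix.diagonal d + L)) i j) ^ 2 := by
    intro j hj
    have hne : i ≠ j := (Finset.ne_of_mem_erase hj).symm
    simp [Matrix.sub_apply, Matrix.add_apply, Matrix.diagonal_apply_ne _ hne]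
  rw [Finset.sum_congr rfl hterm]
  nlinarith [sq_nonneg ((A - (Matrix.diagonal d + L)) i i)]

/-- The main helper: a small set outside which the diagonal of `L' - L` is small. -/
lemma main_helper {n k : ℕ} (L L' : Matrix (Fin n) (Fin n) ℝ)
    (hL : L.rank ≤ k) (hL' : L'.rank ≤ k)
    (ε : ℝ) (hε : 0 < ε) (hε1 : ε < 1) :
    ∃ S : Finset (Fin n), (S.card : ℝ) ≤ 10 * (k : ℝ) / ε ^ 2 ∧
      ∑ i ∈ Finset.univ \ S, ((L' - L) i i) ^ 2 ≤ ε ^ 2 / 4 * offSum (L' - L) := by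
  classical
  set M := L' - L with hM
  set δ : ℝ := 4 / ε ^ 2 with hδdef
  have hδ : 0 < δ := by positivity
  set S : Finset (Fin n) :=
    Finset.univ.filter (fun i => ∑ j ∈ Finset.univ.erase i, (M i j) ^ 2 < δ * (M i i) ^ 2)
    with hSdef
  -- the span of the rows of L and L'
  let eL : (Fin n → ℝ) ≃ₗ[ℝ] EuclideanSpace ℝ (Fin n) :=
    (WithLp.linearEquiv 2 ℝ (Fin n → ℝ)).symm
  let W0 : Submodule ℝ (Fin n → ℝ) :=
    Submodule.span ℝ (Set.range L) ⊔ Submodule.span ℝ (Set.range L')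
  let W : Submodule ℝ (EuclideanSpace ℝ (Fin n)) :=
    W0.map (eL : (Fin n → ℝ) →ₗ[ℝ] EuclideanSpace ℝ (Fin n))
  have hspanL : finrank ℝ (Submodule.span ℝ (Set.range L)) = L.rank := by
    rw [← Matrix.rank_transpose L, Matrix.rank_eq_finrank_span_cols, Matrix.col_transpose, Matrix.row]
  have hspanL' : finrank ℝ (Submodule.span ℝ (Set.range L')) = L'.rank := by
    rw [← Matrix.rank_transpose L', Matrix.rank_eq_finrank_span_cols, Matrix.col_transpose, Matrix.row]
  have hW0 : finrank ℝ W0 ≤ 2 * k := by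
    have := Submodule.finrank_add_le_finrank_add_finrank
      (Submodule.span ℝ (Set.range L)) (Submodule.span ℝ (Set.range L'))
    rw [hspanL, hspanL'] at this
    exact le_trans this (by omega)
  have hWrank : finrank ℝ W ≤ 2 * k := by
    rw [LinearEquiv.finrank_map_eq]
    exact hW0
  let v : Fin n → EuclideanSpace ℝ (Fin n) := fun i => eL (M i)
  have hv : ∀ i, v i ∈ W := by
    intro i
    apply Submodule.mem_map_of_mem
    have hrow : M i = L' i - L i := rfl
    rw [hrow]
    exact sub_mem
      ((le_sup_right : _ ≤ W0) (Submodule.subset_span (Set.mem_range_self i)))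
      ((le_sup_left : _ ≤ W0) (Submodule.subset_span (Set.mem_range_self i)))
  have hvcoord : ∀ i j, v i j = M i j := fun i j => rfl
  have hε2 : ε ^ 2 ≤ 1 := by nlinarith
  have hε2' : 0 < ε ^ 2 := by positivity
  have hcard : (S.card : ℝ) ≤ 10 * (k : ℝ) / ε ^ 2 := by
    have h1 : (S.card : ℝ) ≤ (1 + δ) * (finrank ℝ W) := by
      apply core W v hv δ hδ S
      intro i hi
      rw [hSdef, Finset.mem_filter] at hi
      have hlt := hi.2
      have hnorm : ‖v i‖ ^ 2 = (M i i) ^ 2 + ∑ j ∈ Finset.univ.erase i, (M i j) ^ 2 := by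
        rw [norm_sq_eq]
        simp_rw [hvcoord]
        rw [← Finset.add_sum_erase _ _ (Finset.mem_univ i)]
      rw [hnorm, hvcoord]
      nlinarith
    have h2 : ((finrank ℝ W : ℝ)) ≤ 2 * (k : ℝ) := by exact_mod_cast hWrank
    have h3 : (S.card : ℝ) ≤ (1 + δ) * (2 * k) :=
      h1.trans (mul_le_mul_of_nonneg_left h2 (by positivity))
    have hδ4 : δ * ε ^ 2 = 4 := by rw [hδdef]; field_simp
    rw [le_div_iff₀ hε2']
    nlinarith [mul_le_mul_of_nonneg_right h3 hε2'.le, hδ4, hε2,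
      Nat.cast_nonneg (α := ℝ) k]
  refine ⟨S, hcard, ?_⟩
  have hsum : ∑ i ∈ Finset.univ \ S, (M i i) ^ 2
      ≤ ∑ i ∈ Finset.univ \ S, (1 / δ) * ∑ j ∈ Finset.univ.erase i, (M i j) ^ 2 := by
    apply Finset.sum_le_sum
    intro i hi
    rw [Finset.mem_sdiff, hSdef, Finset.mem_filter] at hi
    have h : δ * M i i ^ 2 ≤ ∑ j ∈ Finset.univ.erase i, (M i j) ^ 2 :=
      not_lt.mp fun hcon => hi.2 ⟨Finset.mem_univ i, hcon⟩
    have heq : M i i ^ 2 = (1 / δ) * (δ * M i i ^ 2) := by field_simp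
    rw [heq]
    exact mul_le_mul_of_nonneg_left h (by positivity)
  calc ∑ i ∈ Finset.univ \ S, (M i i) ^ 2
      ≤ ∑ i ∈ Finset.univ \ S, (1 / δ) * ∑ j ∈ Finset.univ.erase i, (M i j) ^ 2 := hsum
    _ ≤ ∑ i, (1 / δ) * ∑ j ∈ Finset.univ.erase i, (M i j) ^ 2 := by
        apply Finset.sum_le_sum_of_subset_of_nonneg (Finset.subset_univ _)
        intro i _ _
        have : (0:ℝ) ≤ ∑ j ∈ Finset.univ.erase i, (M i j) ^ 2 :=
          Finset.sum_nonneg fun j _ => sq_nonneg _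
        positivity
    _ = (1 / δ) * offSum M := by unfold offSum; rw [Finset.mul_sum]
    _ = ε ^ 2 / 4 * offSum M := by rw [hδdef, one_div_div]
lemma offSum_sub_le {n : ℕ} (A L L' : Matrix (Fin n) (Fin n) ℝ) :
    offSum (L' - L) ≤ 2 * offSum (A - L) + 2 * offSum (A - L') := by
  unfold offSum
  rw [Finset.mul_sum, Finset.mul_sum, ← Finset.sum_add_distrib]
  apply Finset.sum_le_sum
  intro i _
  rw [Finset.mul_sum, Finset.mul_sum, ← Finset.sum_add_distrib]
  apply Finset.sum_le_sum
  intro j _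
  simp only [Matrix.sub_apply]
  nlinarith [sq_nonneg ((A i j - L i j) + (A i j - L' i j))]

end Aux

/-- sparse difference of approximate low-rank-plus-diagonal solutions.
The first conjunct treats the minimizers over all diagonal matrices,
`D(i,i) = A(i,i) − L(i,i)`; the second treats the minimizers over non-negative
diagonal matrices, `D(i,i) = max(0, A(i,i) − L(i,i))`. -/
theorem stmt18
    {n k : ℕ}
    (A L L' : Matrix (Fin n) (Fin n) ℝ)
    (hL_rank : L.rank ≤ k) (hL'_rank : L'.rank ≤ k)
    (C γ : ℝ) (hγ : 0 ≤ γ)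
    (ε : ℝ) (hε : 0 < ε) (hε1 : ε < 1) :
    ((frob2 (A - (Matrix.diagonal (fun i => A i i - L i i) + L)) = C →
      frob2 (A - (Matrix.diagonal (fun i => A i i - L' i i) + L')) ≤ C + γ →
      ∃ S : Finset (Fin n), (S.card : ℝ) ≤ 10 * (k : ℝ) / ε ^ 2 ∧
        ∑ i ∈ Finset.univ \ S,
          ((A i i - L i i) - (A i i - L' i i)) ^ 2 ≤ ε ^ 2 * C + ε ^ 2 * γ)
    ∧
    (frob2 (A - (Matrix.diagonal (fun i => max 0 (A i i - L i i)) + L)) = C →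
      frob2 (A - (Matrix.diagonal (fun i => max 0 (A i i - L' i i)) + L')) ≤ C + γ →
      ∃ S : Finset (Fin n), (S.card : ℝ) ≤ 10 * (k : ℝ) / ε ^ 2 ∧
        ∑ i ∈ Finset.univ \ S,
          (max 0 (A i i - L i i) - max 0 (A i i - L' i i)) ^ 2 ≤ ε ^ 2 * C + ε ^ 2 * γ)) := by
  obtain ⟨S, hScard, hSsum⟩ := main_helper L L' hL_rank hL'_rank ε hε hε1
  have hoff := offSum_sub_le A L L'
  have hdiag : ∀ i, ((L' - L) i i) ^ 2 = ((A i i - L i i) - (A i i - L' i i)) ^ 2 := by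
    intro i
    simp only [Matrix.sub_apply]
    ring
  constructor
  · intro hC hC'
    refine ⟨S, hScard, ?_⟩
    have hC0 : offSum (A - L) ≤ C := hC ▸ offSum_le_frob2 A L _
    have hC1 : offSum (A - L') ≤ C + γ := le_trans (offSum_le_frob2 A L' _) hC'
    have hkey : ∑ i ∈ Finset.univ \ S, ((L' - L) i i) ^ 2 ≤ ε ^ 2 * C + ε ^ 2 * γ := by
      nlinarith [hSsum, sq_nonneg ε]
    calc ∑ i ∈ Finset.univ \ S, ((A i i - L i i) - (A i i - L' i i)) ^ 2
        = ∑ i ∈ Finset.univ \ S, ((L' - L) i i) ^ 2 :=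
          Finset.sum_congr rfl fun i _ => (hdiag i).symm
      _ ≤ ε ^ 2 * C + ε ^ 2 * γ := hkey
  · intro hC hC'
    refine ⟨S, hScard, ?_⟩
    have hC0 : offSum (A - L) ≤ C := hC ▸ offSum_le_frob2 A L _
    have hC1 : offSum (A - L') ≤ C + γ := le_trans (offSum_le_frob2 A L' _) hC'
    have hkey : ∑ i ∈ Finset.univ \ S, ((L' - L) i i) ^ 2 ≤ ε ^ 2 * C + ε ^ 2 * γ := by
      nlinarith [hSsum, sq_nonneg ε]
    calc ∑ i ∈ Finset.univ \ S, (max 0 (A i i - L i i) - max 0 (A i i - L' i i)) ^ 2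
        ≤ ∑ i ∈ Finset.univ \ S, ((L' - L) i i) ^ 2 := by
          apply Finset.sum_le_sum
          intro i _
          rw [hdiag i]
          have habs := abs_max_sub_max_le_abs (A i i - L i i) (A i i - L' i i) 0
          have h1 : (max 0 (A i i - L i i) - max 0 (A i i - L' i i)) ^ 2
              = |max (A i i - L i i) 0 - max (A i i - L' i i) 0| ^ 2 := by
            rw [sq_abs, max_comm, max_comm (A i i - L' i i) 0]
          rw [h1, ← sq_abs ((A i i - L i i) - (A i i - L' i i))]
          exact pow_le_pow_left₀ (abs_nonneg _) habs 2
      _ ≤ ε ^ 2 * C + ε ^ 2 * γ := hkey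
end

section
/- Bounded low-rank factors: Let M ∈ ℝ^{n×p} with |M(i,j)| ≤ Δ for all i, j, for some Δ > 0, and let L minimize ‖M − L̂‖_F over all matrices L̂ ∈ ℝ^{n×p} of rank at most k. Then L can be written as L = U·Vᵀ for some U ∈ ℝ^{n×k} and V ∈ ℝ^{p×k} such that every entry of U and every entry of V is bounded in magnitude by n^{1/4}·Δ^{1/2}. -/
open Matrix BigOperators

lemma sum_dite_fin {k r : ℕ} (hr : r ≤ k) (G : Fin r → ℝ) :
    ∑ l : Fin k, (if h : (l : ℕ) < r then G ⟨l, h⟩ else 0) = ∑ l : Fin r, G l := by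
  have h2 : ∑ l : Fin r, G l = ∑ l ∈ Finset.range r, (if h : l < r then G ⟨l, h⟩ else 0) := by
    rw [← Fin.sum_univ_eq_sum_range]
    exact Finset.sum_congr rfl fun l _ => by rw [dif_pos l.isLt]
  rw [Fin.sum_univ_eq_sum_range (fun l => if h : l < r then G ⟨l, h⟩ else 0) k, h2]
  refine (Finset.sum_subset (Finset.range_subset_range.2 hr) ?_).symm
  intro x _ hx
  rw [Finset.mem_range, not_lt] at hx
  exact dif_neg (by omega)

lemma euclid_sum_apply {n m : ℕ} (f : Fin m → EuclideanSpace ℝ (Fin n)) (i : Fin n) :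
    (∑ l, f l) i = ∑ l, f l i := by
  exact map_sum (PiLp.projₗ (𝕜 := ℝ) 2 (fun _ : Fin n => ℝ) i) f Finset.univ

lemma col_bound {n p k : ℕ}
    (Δ : ℝ) (hΔ : 0 < Δ)
    (M : Matrix (Fin n) (Fin p) ℝ) (hM : ∀ i j, |M i j| ≤ Δ)
    (L : Matrix (Fin n) (Fin p) ℝ) (hL_rank : L.rank ≤ k)
    (hL_opt : ∀ L' : Matrix (Fin n) (Fin p) ℝ, L'.rank ≤ k →
      frob2 (M - L) ≤ frob2 (M - L')) (j : Fin p) :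
    ∑ i, (L i j) ^ 2 ≤ (n : ℝ) * Δ ^ 2 := by
  set a : ℝ := ∑ i, (L i j) ^ 2 with ha_def
  set b : ℝ := ∑ i, M i j * L i j with hb_def
  have ha0 : 0 ≤ a := Finset.sum_nonneg fun i _ => sq_nonneg _
  have hMj : ∑ i, (M i j) ^ 2 ≤ (n : ℝ) * Δ ^ 2 := by
    calc ∑ i, (M i j) ^ 2 ≤ ∑ _i : Fin n, Δ ^ 2 := by
          refine Finset.sum_le_sum fun i _ => ?_
          have := hM i j
          nlinarith [abs_nonneg (M i j), sq_abs (M i j)]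
      _ = (n : ℝ) * Δ ^ 2 := by simp [mul_comm]
  rcases eq_or_lt_of_le ha0 with h | h
  · rw [← h]; positivity
  have key : ∀ t : ℝ, 0 ≤ (t ^ 2 - 1) * a + 2 * (1 - t) * b := by
    intro t
    set L' : Matrix (Fin n) (Fin p) ℝ := L * Matrix.diagonal (fun j' => if j' = j then t else 1)
      with hL'def
    have hrank : L'.rank ≤ k := le_trans (Matrix.rank_mul_le_left _ _) hL_rank
    have hopt := hL_opt L' hrank
    have hL' : ∀ i j', L' i j' = if j' = j then t * L i j' else L i j' := by
      intro i j'
      rw [hL'def, Matrix.mul_diagonal]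
      split_ifs <;> ring
    have per_i : ∀ i, ∑ j', (M i j' - L' i j') ^ 2
        = (∑ j', (M i j' - L i j') ^ 2)
          + ((M i j - t * L i j) ^ 2 - (M i j - L i j) ^ 2) := by
      intro i
      have step : ∀ j', (M i j' - L' i j') ^ 2 = (M i j' - L i j') ^ 2
          + (if j' = j then (M i j - t * L i j) ^ 2 - (M i j - L i j) ^ 2 else 0) := by
        intro j'
        rw [hL']
        split_ifs with h'
        · subst h'; ring
        · ring
      simp_rw [step, Finset.sum_add_distrib, Finset.sum_ite_eq' Finset.univ j, Finset.mem_univ,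
        if_true]
    have expand : frob2 (M - L') = frob2 (M - L)
        + ((t ^ 2 - 1) * a + 2 * (1 - t) * b) := by
      simp only [frob2, Matrix.sub_apply]
      rw [Finset.sum_congr rfl fun i _ => per_i i, Finset.sum_add_distrib]
      congr 1
      have hterm : ∀ i, (M i j - t * L i j) ^ 2 - (M i j - L i j) ^ 2
          = (t ^ 2 - 1) * (L i j) ^ 2 + 2 * (1 - t) * (M i j * L i j) := by intro i; ring
      rw [Finset.sum_congr rfl fun i _ => hterm i, Finset.sum_add_distrib, ← Finset.mul_sum,
        ← Finset.mul_sum]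
    rw [expand] at hopt
    linarith
  have hq := key (b / a)
  have hab : a = b := by
    have h1 : ((b / a) ^ 2 - 1) * a + 2 * (1 - b / a) * b = -((a - b) ^ 2) / a := by
      field_simp
      ring
    rw [h1] at hq
    have h2 : (a - b) ^ 2 ≤ 0 := by
      rw [le_div_iff₀ h] at hq
      nlinarith
    nlinarith [sq_nonneg (a - b)]
  have hcs : b ^ 2 ≤ (∑ i, (M i j) ^ 2) * a :=
    Finset.sum_mul_sq_le_sq_mul_sq Finset.univ (fun i => M i j) (fun i => L i j)
  nlinarith

/-- bounded low-rank factors. If `|M(i,j)| ≤ Δ` and `L` is a best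
rank-at-most-`k` Frobenius-norm approximation of `M`, then `L = U·Vᵀ` with all entries
of `U` and `V` bounded in magnitude by `n^{1/4}·Δ^{1/2}`. -/
theorem stmt19
    {n p k : ℕ}
    (Δ : ℝ) (hΔ : 0 < Δ)
    (M : Matrix (Fin n) (Fin p) ℝ) (hM : ∀ i j, |M i j| ≤ Δ)
    (L : Matrix (Fin n) (Fin p) ℝ) (hL_rank : L.rank ≤ k)
    (hL_opt : ∀ L' : Matrix (Fin n) (Fin p) ℝ, L'.rank ≤ k →
      frob2 (M - L) ≤ frob2 (M - L')) :
    ∃ (U : Matrix (Fin n) (Fin k) ℝ) (V : Matrix (Fin p) (Fin k) ℝ),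
      L = U * Vᵀ ∧
      (∀ i l, |U i l| ≤ (n : ℝ) ^ ((1 : ℝ) / 4) * Δ ^ ((1 : ℝ) / 2)) ∧
      (∀ j l, |V j l| ≤ (n : ℝ) ^ ((1 : ℝ) / 4) * Δ ^ ((1 : ℝ) / 2)) := by
  classical
  rcases Nat.eq_zero_or_pos n with hn | hn
  · subst hn
    refine ⟨0, 0, ?_, fun i _ => i.elim0, ?_⟩
    · funext i j; exact i.elim0
    · intro j l
      simp [Real.zero_rpow (by norm_num : (1 : ℝ) / 4 ≠ 0)]
  -- main case : n > 0
  have hn0 : (0 : ℝ) < (n : ℝ) := by exact_mod_cast hn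
  set c : ℝ := (n : ℝ) ^ ((1 : ℝ) / 4) * Δ ^ ((1 : ℝ) / 2) with hc_def
  have hc : 0 < c := by
    apply mul_pos
    · exact Real.rpow_pos_of_pos hn0 _
    · exact Real.rpow_pos_of_pos hΔ _
  have hc4 : c * c * (c * c) = (n : ℝ) * Δ ^ 2 := by
    have h1 : ((n : ℝ) ^ ((1 : ℝ) / 4)) ^ (4 : ℕ) = (n : ℝ) := by
      rw [← Real.rpow_natCast ((n : ℝ) ^ ((1 : ℝ) / 4)) 4, ← Real.rpow_mul hn0.le]
      norm_num
    have h2 : (Δ ^ ((1 : ℝ) / 2)) ^ (4 : ℕ) = Δ ^ 2 := by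
      rw [← Real.rpow_natCast (Δ ^ ((1 : ℝ) / 2)) 4, ← Real.rpow_mul hΔ.le]
      norm_num
    calc c * c * (c * c) = ((n : ℝ) ^ ((1 : ℝ) / 4)) ^ (4 : ℕ) * (Δ ^ ((1 : ℝ) / 2)) ^ (4 : ℕ) := by
          rw [hc_def]; ring
      _ = (n : ℝ) * Δ ^ 2 := by rw [h1, h2]
  -- set up the column space and orthonormal basis
  set col : Fin p → EuclideanSpace ℝ (Fin n) :=
    fun j => (WithLp.equiv 2 (Fin n → ℝ)).symm (fun i => L i j) with hcol_def
  set W : Submodule ℝ (EuclideanSpace ℝ (Fin n)) := Submodule.span ℝ (Set.range col) with hW_def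
  have hWk : Module.finrank ℝ W ≤ k := by
    have hmap : W = (Submodule.span ℝ (Set.range (Matrix.col L))).map
        (WithLp.linearEquiv 2 ℝ (Fin n → ℝ)).symm.toLinearMap := by
      rw [hW_def, Submodule.map_span]
      congr 1
      rw [← Set.range_comp]
      rfl
    rw [hmap, LinearEquiv.finrank_map_eq, ← Matrix.rank_eq_finrank_span_cols]
    exact hL_rank
  set r := Module.finrank ℝ W with hr_def
  set bW := stdOrthonormalBasis ℝ W with hbW_def
  set g : Fin r → EuclideanSpace ℝ (Fin n) := fun l => (bW l : EuclideanSpace ℝ (Fin n))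
    with hg_def
  have hg_sq : ∀ l, ∑ i, (g l i) ^ 2 = 1 := by
    intro l
    have h1 : ‖g l‖ = 1 := by
      simp only [hg_def]
      rw [← Submodule.coe_norm]
      exact bW.orthonormal.1 l
    have h2 := EuclideanSpace.norm_eq (g l)
    rw [h1] at h2
    have h3 : ∑ i, ‖g l i‖ ^ 2 = 1 := Real.sqrt_eq_one.mp h2.symm
    simpa [Real.norm_eq_abs, sq_abs] using h3
  have hg_coord : ∀ l i, |g l i| ≤ 1 := by
    intro l i
    have h1 : (g l i) ^ 2 ≤ 1 := by
      rw [← hg_sq l]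
      exact Finset.single_le_sum (fun i' _ => sq_nonneg (g l i')) (Finset.mem_univ i)
    nlinarith [abs_nonneg (g l i), sq_abs (g l i)]
  have hrepr : ∀ (j : Fin p) (i : Fin n),
      L i j = ∑ l : Fin r, (∑ i', g l i' * L i' j) * g l i := by
    intro j i
    have hmem : col j ∈ W := Submodule.subset_span (Set.mem_range_self j)
    set v : W := ⟨col j, hmem⟩ with hv_def
    have hsum := bW.sum_repr v
    have h1 : (∑ l, bW.repr v l • g l) = col j := by
      simp only [hg_def]
      have h0 := congrArg (Subtype.val) hsum
      simp only [AddSubmonoidClass.coe_finset_sum, SetLike.val_smul] at h0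
      exact h0
    have h2 : ∀ l, bW.repr v l = ∑ i', g l i' * L i' j := by
      intro l
      rw [bW.repr_apply_apply, Submodule.coe_inner]
      simp only [PiLp.inner_apply, RCLike.inner_apply, conj_trivial]
      exact Finset.sum_congr rfl fun x _ => mul_comm _ _
    have h3 := congrArg (fun x : EuclideanSpace ℝ (Fin n) => x i) h1
    simp only at h3
    rw [euclid_sum_apply] at h3
    simp only [PiLp.smul_apply, smul_eq_mul] at h3
    have h4 : col j i = L i j := rfl
    rw [h4] at h3
    rw [← h3]
    exact Finset.sum_congr rfl fun l _ => by rw [h2 l]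
  -- define the factors
  set A : Matrix (Fin n) (Fin k) ℝ :=
    fun i l => if h : (l : ℕ) < r then g ⟨(l : ℕ), h⟩ i else 0 with hA_def
  set B : Matrix (Fin p) (Fin k) ℝ :=
    fun j l => if h : (l : ℕ) < r then ∑ i', g ⟨(l : ℕ), h⟩ i' * L i' j else 0 with hB_def
  have hB_bound : ∀ j l, |B j l| ≤ c * c := by
    intro j l
    rw [hB_def]
    dsimp only
    split_ifs with h
    · have hcs : (∑ i', g ⟨(l : ℕ), h⟩ i' * L i' j) ^ 2
          ≤ (∑ i', (g ⟨(l : ℕ), h⟩ i') ^ 2) * ∑ i', (L i' j) ^ 2 :=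
        Finset.sum_mul_sq_le_sq_mul_sq Finset.univ _ _
      have hLb := col_bound Δ hΔ M hM L hL_rank hL_opt j
      rw [hg_sq, one_mul] at hcs
      have h5 : (∑ i', g ⟨(l : ℕ), h⟩ i' * L i' j) ^ 2 ≤ (c * c) * (c * c) := by
        rw [hc4]; linarith
      nlinarith [abs_nonneg (∑ i', g ⟨(l : ℕ), h⟩ i' * L i' j),
        sq_abs (∑ i', g ⟨(l : ℕ), h⟩ i' * L i' j)]
    · simpa using (mul_pos hc hc).le
  refine ⟨fun i l => c * A i l, fun j l => B j l / c, ?_, ?_, ?_⟩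
  · ext i j
    erw [Matrix.mul_apply]
    show L i j = ∑ l, c * A i l * (B j l / c)
    have hterm : ∀ l : Fin k, c * A i l * (B j l / c) = A i l * B j l := by
      intro l
      field_simp
    rw [Finset.sum_congr rfl fun l _ => hterm l]
    have hdite : ∀ l : Fin k, A i l * B j l
        = if h : (l : ℕ) < r then (∑ i', g ⟨(l : ℕ), h⟩ i' * L i' j) * g ⟨(l : ℕ), h⟩ i
          else 0 := by
      intro l
      rw [hA_def, hB_def]
      dsimp only
      split_ifs with h
      · ring
      · ring
    rw [Finset.sum_congr rfl fun l _ => hdite l,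
      sum_dite_fin hWk (fun l => (∑ i', g l i' * L i' j) * g l i)]
    exact hrepr j i
  · intro i l
    have h1 : |A i l| ≤ 1 := by
      rw [hA_def]
      dsimp only
      split_ifs with h
      · exact hg_coord _ i
      · simp
    calc |c * A i l| = c * |A i l| := by rw [abs_mul, abs_of_pos hc]
      _ ≤ c * 1 := by nlinarith [abs_nonneg (A i l)]
      _ = c := mul_one c
  · intro j l
    have h1 := hB_bound j l
    rw [abs_div, abs_of_pos hc, div_le_iff₀ hc]
    calc |B j l| ≤ c * c := h1
      _ = ((n : ℝ) ^ ((1 : ℝ) / 4) * Δ ^ ((1 : ℝ) / 2)) * c := by rw [← hc_def]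
end
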